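/- Unital commutative semisimple fMV-algebras have the amalgamation property: if Z, A, B are unital commutative semisimple fMV-algebras and z_A : Z → A, z_B : Z → B are injective fMV-algebra homomorphisms, then there exist a unital commutative semisimple fMV-algebra E and injective fMV-algebra homomorphisms f_A : A → E and f_B : B → E with f_A ∘ z_A = f_B ∘ z_B. -/

import Mathlib

universe u v w

/-- An MV-algebra structure on the type `A`. -/
structure MVAlg (A : Type u) where
  oplus : A → A → A
  star : A → A
  zero : A
  oplus_comm : ∀ x y, oplus x y = oplus y x
  oplus_assoc : ∀ x y z, oplus (oplus x y) z = oplus x (oplus y z)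
  oplus_zero : ∀ x, oplus x zero = x
  star_star : ∀ x, star (star x) = x
  oplus_one : ∀ x, oplus x (star zero) = star zero
  luk : ∀ x y, oplus (star (oplus (star x) y)) y = oplus (star (oplus (star y) x)) x

namespace MVAlg

variable {A : Type u}

/-- The top element `1 := 0*`. -/
def one (M : MVAlg A) : A := M.star M.zero

/-- The underlying order: `x ≤ y` iff `x* ⊕ y = 1`. -/
def le (M : MVAlg A) (x y : A) : Prop := M.oplus (M.star x) y = M.one

/-- An ideal: contains `0`, closed under `⊕` and downward closed. -/
def IsIdeal (M : MVAlg A) (I : Set A) : Prop :=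
  M.zero ∈ I ∧ (∀ x ∈ I, ∀ y ∈ I, M.oplus x y ∈ I) ∧ (∀ x y, M.le x y → y ∈ I → x ∈ I)

/-- A maximal proper ideal. -/
def IsMaximalIdeal (M : MVAlg A) (I : Set A) : Prop :=
  M.IsIdeal I ∧ I ≠ Set.univ ∧ ∀ J, M.IsIdeal J → J ≠ Set.univ → I ⊆ J → J = I

/-- Semisimplicity: the intersection of all maximal proper ideals is `{0}`. -/
def Semisimple (M : MVAlg A) : Prop :=
  {x | ∀ I, M.IsMaximalIdeal I → x ∈ I} = {M.zero}

end MVAlg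

/-- Homomorphisms of MV-algebras preserve `⊕`, `*` and `0`. -/
def MVHom {A : Type u} {B : Type v} (M : MVAlg A) (N : MVAlg B) (f : A → B) : Prop :=
  (∀ x y, f (M.oplus x y) = N.oplus (f x) (f y)) ∧
  (∀ x, f (M.star x) = N.star (f x)) ∧ f M.zero = N.zero

/-- A unital commutative PMV-algebra. -/
structure PMVAlg (A : Type u) extends MVAlg A where
  mul : A → A → A
  mul_assoc : ∀ x y z, mul (mul x y) z = mul x (mul y z)
  mul_comm : ∀ x y, mul x y = mul y x
  mul_one : ∀ x, mul x toMVAlg.one = x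
  mul_linear_right : ∀ x y z, toMVAlg.le y (toMVAlg.star z) →
    mul x (toMVAlg.oplus y z) = toMVAlg.oplus (mul x y) (mul x z)
  mul_linear_left : ∀ x y z, toMVAlg.le x (toMVAlg.star y) →
    mul (toMVAlg.oplus x y) z = toMVAlg.oplus (mul x z) (mul y z)

/-- Semisimplicity of a PMV-algebra is semisimplicity of its MV-reduct. -/
def PMVAlg.Semisimple {A : Type u} (P : PMVAlg A) : Prop := P.toMVAlg.Semisimple

/-- Homomorphisms of PMV-algebras. -/
def PMVHom {A : Type u} {B : Type v} (P : PMVAlg A) (Q : PMVAlg B) (f : A → B) : Prop :=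
  MVHom P.toMVAlg Q.toMVAlg f ∧ ∀ x y, f (P.mul x y) = Q.mul (f x) (f y)

/-- A Riesz MV-algebra: an MV-algebra with a scalar multiplication by elements of `[0,1]`. -/
structure RieszMVAlg (A : Type u) extends MVAlg A where
  smul : ℝ → A → A
  smul_oplus : ∀ α : ℝ, α ∈ Set.Icc (0:ℝ) 1 → ∀ x y, toMVAlg.le x (toMVAlg.star y) →
    smul α (toMVAlg.oplus x y) = toMVAlg.oplus (smul α x) (smul α y)
  add_smul : ∀ α β : ℝ, α ∈ Set.Icc (0:ℝ) 1 → β ∈ Set.Icc (0:ℝ) 1 → α + β ≤ 1 → ∀ x,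
    smul (α + β) x = toMVAlg.oplus (smul α x) (smul β x) ∧
    toMVAlg.le (smul α x) (toMVAlg.star (smul β x))
  mul_smul : ∀ α β : ℝ, α ∈ Set.Icc (0:ℝ) 1 → β ∈ Set.Icc (0:ℝ) 1 → ∀ x,
    smul (α * β) x = smul α (smul β x)
  one_smul : ∀ x, smul 1 x = x

/-- Semisimplicity of a Riesz MV-algebra. -/
def RieszMVAlg.Semisimple {A : Type u} (R : RieszMVAlg A) : Prop := R.toMVAlg.Semisimple

/-- Homomorphisms of Riesz MV-algebras. -/
def RieszMVHom {A : Type u} {B : Type v} (R : RieszMVAlg A) (S : RieszMVAlg B) (f : A → B) : Prop :=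
  MVHom R.toMVAlg S.toMVAlg f ∧
  ∀ α : ℝ, α ∈ Set.Icc (0:ℝ) 1 → ∀ x, f (R.smul α x) = S.smul α (f x)

/-- A unital commutative fMV-algebra. -/
structure FMVAlg (A : Type u) extends PMVAlg A, RieszMVAlg A where
  smul_mul_left : ∀ α : ℝ, α ∈ Set.Icc (0:ℝ) 1 → ∀ x y,
    smul α (mul x y) = mul (smul α x) y
  smul_mul_right : ∀ α : ℝ, α ∈ Set.Icc (0:ℝ) 1 → ∀ x y,
    smul α (mul x y) = mul x (smul α y)

/-- Semisimplicity of an fMV-algebra. -/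
def FMVAlg.Semisimple {A : Type u} (F : FMVAlg A) : Prop := F.toMVAlg.Semisimple

/-- Homomorphisms of fMV-algebras preserve `⊕`, `*`, `0`, `·` and scalar multiplication. -/
def FMVHom {A : Type u} {B : Type v} (F : FMVAlg A) (G : FMVAlg B) (f : A → B) : Prop :=
  MVHom F.toMVAlg G.toMVAlg f ∧
  (∀ x y, f (F.mul x y) = G.mul (f x) (f y)) ∧
  (∀ α : ℝ, α ∈ Set.Icc (0:ℝ) 1 → ∀ x, f (F.smul α x) = G.smul α (f x))

namespace MVAlg

variable {A : Type u}
-- ====== basic lemma library ======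
variable (M : MVAlg A)

instance instAssocOplus : Std.Associative M.oplus := ⟨M.oplus_assoc⟩
instance instCommOplus : Std.Commutative M.oplus := ⟨M.oplus_comm⟩

def sub (x y : A) : A := M.star (M.oplus (M.star x) y)

def sup (x y : A) : A := M.oplus (M.sub x y) y

theorem oplus_one' (x : A) : M.oplus x M.one = M.one := M.oplus_one x
theorem one_oplus (x : A) : M.oplus M.one x = M.one := by rw [M.oplus_comm]; exact M.oplus_one x
theorem zero_oplus (x : A) : M.oplus M.zero x = x := by rw [M.oplus_comm]; exact M.oplus_zero x
theorem star_one : M.star M.one = M.zero := by rw [one, M.star_star]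
theorem star_zero : M.star M.zero = M.one := rfl

theorem star_inj {x y : A} (h : M.star x = M.star y) : x = y := by
  rw [← M.star_star x, h, M.star_star]

theorem star_oplus_self (x : A) : M.oplus (M.star x) x = M.one := by
  have h := M.luk M.one x
  rw [M.star_one, M.zero_oplus, M.oplus_one'] at h
  exact h

theorem oplus_star_self (x : A) : M.oplus x (M.star x) = M.one := by
  rw [M.oplus_comm]; exact M.star_oplus_self x

theorem le_refl (x : A) : M.le x x := M.star_oplus_self x
theorem le_one (x : A) : M.le x M.one := M.oplus_one' _
theorem zero_le (x : A) : M.le M.zero x := by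
  show M.oplus (M.star M.zero) x = M.one
  rw [star_zero, M.one_oplus]

theorem sup_comm (x y : A) : M.sup x y = M.sup y x := M.luk x y

theorem sub_eq_zero_of_le {x y : A} (h : M.le x y) : M.sub x y = M.zero := by
  unfold sub; rw [h, star_one]

theorem le_of_sub_eq_zero {x y : A} (h : M.sub x y = M.zero) : M.le x y := by
  have : M.star (M.sub x y) = M.star M.zero := by rw [h]
  rw [sub, M.star_star] at this
  exact this

theorem sup_of_le {x y : A} (h : M.le x y) : M.sup x y = y := by
  rw [sup, M.sub_eq_zero_of_le h, M.zero_oplus]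

theorem eq_oplus_sub_of_le {x y : A} (h : M.le x y) : y = M.oplus x (M.sub y x) := by
  have h1 : M.sup y x = y := by rw [M.sup_comm, M.sup_of_le h]
  calc y = M.sup y x := h1.symm
    _ = M.oplus (M.sub y x) x := rfl
    _ = M.oplus x (M.sub y x) := M.oplus_comm _ _

theorem le_oplus_right (x c : A) : M.le x (M.oplus x c) := by
  show M.oplus (M.star x) (M.oplus x c) = M.one
  rw [← M.oplus_assoc, M.star_oplus_self, M.one_oplus]

theorem le_oplus_left (x c : A) : M.le x (M.oplus c x) := by
  rw [M.oplus_comm]; exact M.le_oplus_right x c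

theorem le_iff_exists {x y : A} : M.le x y ↔ ∃ c, y = M.oplus x c :=
  ⟨fun h => ⟨M.sub y x, M.eq_oplus_sub_of_le h⟩, fun ⟨c, hc⟩ => hc ▸ M.le_oplus_right x c⟩

theorem le_trans {x y z : A} (h1 : M.le x y) (h2 : M.le y z) : M.le x z := by
  obtain ⟨c, hc⟩ := M.le_iff_exists.mp h1
  obtain ⟨d, hd⟩ := M.le_iff_exists.mp h2
  exact M.le_iff_exists.mpr ⟨M.oplus c d, by rw [hd, hc, M.oplus_assoc]⟩

theorem le_antisymm {x y : A} (h1 : M.le x y) (h2 : M.le y x) : x = y := by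
  have := M.sup_of_le h1
  have h3 := M.sup_of_le h2
  rw [M.sup_comm] at h3
  rw [← this, h3]

theorem oplus_le_oplus_left {x y : A} (h : M.le x y) (z : A) :
    M.le (M.oplus x z) (M.oplus y z) := by
  obtain ⟨c, hc⟩ := M.le_iff_exists.mp h
  exact M.le_iff_exists.mpr ⟨c, by rw [hc]; ac_rfl⟩

theorem oplus_le_oplus_right {x y : A} (h : M.le x y) (z : A) :
    M.le (M.oplus z x) (M.oplus z y) := by
  rw [M.oplus_comm z x, M.oplus_comm z y]; exact M.oplus_le_oplus_left h z

theorem oplus_le_oplus {x y x' y' : A} (h : M.le x x') (h' : M.le y y') :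
    M.le (M.oplus x y) (M.oplus x' y') :=
  M.le_trans (M.oplus_le_oplus_left h y) (M.oplus_le_oplus_right h' x')

theorem star_le_star {x y : A} (h : M.le x y) : M.le (M.star y) (M.star x) := by
  show M.oplus (M.star (M.star y)) (M.star x) = M.one
  rw [M.star_star, M.oplus_comm]; exact h

theorem le_of_star_le_star {x y : A} (h : M.le (M.star y) (M.star x)) : M.le x y := by
  have := M.star_le_star h
  rwa [M.star_star, M.star_star] at this

theorem one_le {x : A} (h : M.le M.one x) : x = M.one := M.le_antisymm (M.le_one x) h

theorem star_sub (x y : A) : M.star (M.sub x y) = M.oplus (M.star x) y := by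
  rw [sub, M.star_star]

theorem sub_le_left (x y : A) : M.le (M.sub x y) x := by
  show M.oplus (M.star (M.sub x y)) x = M.one
  rw [M.star_sub]
  have h : M.oplus (M.oplus (M.star x) y) x = M.oplus (M.oplus (M.star x) x) y := by ac_rfl
  rw [h, M.star_oplus_self, M.one_oplus]

theorem sub_le_star (x y : A) : M.le (M.sub x y) (M.star y) := by
  show M.oplus (M.star (M.sub x y)) (M.star y) = M.one
  rw [M.star_sub, M.oplus_assoc, M.oplus_star_self, M.oplus_one']

theorem le_star_sub (x y : A) : M.le y (M.star (M.sub x y)) := by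
  have := M.star_le_star (M.sub_le_star x y)
  rwa [M.star_star] at this

theorem le_oplus_sub (x y : A) : M.le x (M.oplus y (M.sub x y)) := by
  show M.oplus (M.star x) (M.oplus y (M.sub x y)) = M.one
  rw [← M.oplus_assoc]
  exact M.oplus_star_self (M.oplus (M.star x) y)

theorem oplus_sub_le (x y : A) : M.le (M.sub (M.oplus x y) x) y := by
  show M.oplus (M.star (M.sub (M.oplus x y) x)) y = M.one
  rw [M.star_sub]
  have h : M.oplus (M.oplus (M.star (M.oplus x y)) x) y
      = M.oplus (M.star (M.oplus x y)) (M.oplus x y) := by ac_rfl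
  rw [h]
  exact M.star_oplus_self _

theorem sub_mono_left {x x' : A} (h : M.le x x') (y : A) : M.le (M.sub x y) (M.sub x' y) :=
  M.star_le_star (M.oplus_le_oplus_left (M.star_le_star h) y)

theorem sub_anti_right {y y' : A} (h : M.le y y') (x : A) : M.le (M.sub x y') (M.sub x y) :=
  M.star_le_star (M.oplus_le_oplus_right h _)

theorem sub_le_of_le_oplus {u v w : A} (h : M.le u (M.oplus v w)) : M.le (M.sub u v) w :=
  M.le_trans (M.sub_mono_left h v) (M.oplus_sub_le v w)

theorem sub_self (x : A) : M.sub x x = M.zero := M.sub_eq_zero_of_le (M.le_refl x)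
theorem sub_zero (x : A) : M.sub x M.zero = x := by
  show M.star (M.oplus (M.star x) M.zero) = x
  rw [M.oplus_zero, M.star_star]
theorem zero_sub (x : A) : M.sub M.zero x = M.zero := M.sub_eq_zero_of_le (M.zero_le x)
theorem sub_one (x : A) : M.sub x M.one = M.zero := M.sub_eq_zero_of_le (M.le_one x)
theorem one_sub (x : A) : M.sub M.one x = M.star x := by
  show M.star (M.oplus (M.star M.one) x) = M.star x
  rw [M.star_one, M.zero_oplus]

theorem star_sub_star (x y : A) : M.sub (M.star y) (M.star x) = M.sub x y := by
  show M.star (M.oplus (M.star (M.star y)) (M.star x)) = M.star (M.oplus (M.star x) y)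
  rw [M.star_star, M.oplus_comm]

theorem sub_sub (a b c : A) : M.sub (M.sub a b) c = M.sub a (M.oplus b c) := by
  show M.star (M.oplus (M.star (M.sub a b)) c) = _
  rw [M.star_sub, M.oplus_assoc]
  rfl

theorem le_sup_left (x y : A) : M.le x (M.sup x y) := by
  rw [M.sup_comm]; exact M.le_oplus_left x _

theorem le_sup_right (x y : A) : M.le y (M.sup x y) := M.le_oplus_left y _

theorem sup_le {x y z : A} (h1 : M.le x z) (h2 : M.le y z) : M.le (M.sup x y) z := by
  have h3 : M.le (M.sup x y) (M.sup z y) := M.oplus_le_oplus_left (M.sub_mono_left h1 y) y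
  rw [M.sup_comm z y, M.sup_of_le h2] at h3
  exact h3

theorem exact_sub {a b : A} (h : M.le b (M.star a)) : M.sub (M.oplus a b) a = b := by
  have key : M.oplus (M.star (M.oplus a b)) a = M.star b := by
    have h1 : M.star (M.oplus a b) = M.sub (M.star b) a := by
      show _ = M.star (M.oplus (M.star (M.star b)) a)
      rw [M.star_star, M.oplus_comm a b]
    rw [h1]
    have h2 : M.oplus (M.sub (M.star b) a) a = M.sup (M.star b) a := rfl
    have ha : M.le a (M.star b) := M.le_of_star_le_star (by rwa [M.star_star])
    rw [h2, M.sup_comm, M.sup_of_le ha]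
  show M.star (M.oplus (M.star (M.oplus a b)) a) = b
  rw [key, M.star_star]

theorem sub_oplus_cancel {x s : A} (h : M.le x s) : M.oplus (M.sub s x) x = s := by
  have := M.eq_oplus_sub_of_le h
  rw [M.oplus_comm] at this
  exact this.symm

theorem sub_sub_cancel {x s : A} (h : M.le x s) : M.sub s (M.sub s x) = x := by
  have hh : M.oplus (M.sub s x) x = s := M.sub_oplus_cancel h
  calc M.sub s (M.sub s x) = M.sub (M.oplus (M.sub s x) x) (M.sub s x) := by rw [hh]
    _ = x := M.exact_sub (M.le_star_sub s x)

theorem triangle (a b c : A) : M.le (M.sub a c) (M.oplus (M.sub a b) (M.sub b c)) := by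
  have h1 : M.le a (M.oplus c (M.oplus (M.sub b c) (M.sub a b))) := by
    have : M.le a (M.oplus b (M.sub a b)) := M.le_oplus_sub a b
    refine M.le_trans this ?_
    have hb : M.le b (M.oplus c (M.sub b c)) := M.le_oplus_sub b c
    have := M.oplus_le_oplus_left hb (M.sub a b)
    rwa [M.oplus_assoc] at this
  have := M.sub_le_of_le_oplus h1
  rwa [M.oplus_comm] at this

theorem oplus_sub_oplus_le (a b c d : A) :
    M.le (M.sub (M.oplus a b) (M.oplus c d)) (M.oplus (M.sub a c) (M.sub b d)) := by
  apply M.sub_le_of_le_oplus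
  have h1 : M.le (M.oplus a b) (M.oplus (M.oplus c (M.sub a c)) (M.oplus d (M.sub b d))) :=
    M.oplus_le_oplus (M.le_oplus_sub a c) (M.le_oplus_sub b d)
  have h2 : M.oplus (M.oplus c (M.sub a c)) (M.oplus d (M.sub b d))
      = M.oplus (M.oplus c d) (M.oplus (M.sub a c) (M.sub b d)) := by ac_rfl
  rw [← h2]
  exact h1

theorem oplus_sub_le' (p q w : A) : M.le (M.sub (M.oplus p q) w) (M.oplus (M.sub p w) q) := by
  apply M.sub_le_of_le_oplus
  have h1 : M.le (M.oplus p q) (M.oplus (M.oplus w (M.sub p w)) q) :=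
    M.oplus_le_oplus_left (M.le_oplus_sub p w) q
  rwa [M.oplus_assoc] at h1

theorem sub_sub_le (u v w : A) : M.le (M.sub (M.sub u w) (M.sub v w)) (M.sub u v) := by
  apply M.sub_le_of_le_oplus
  have h1 : M.le (M.sub u w) (M.sub (M.oplus v (M.sub u v)) w) :=
    M.sub_mono_left (M.le_oplus_sub u v) w
  refine M.le_trans h1 ?_
  exact M.oplus_sub_le' v (M.sub u v) w

theorem sub_sub_le' (u v w : A) : M.le (M.sub (M.sub w v) (M.sub w u)) (M.sub u v) := by
  apply M.sub_le_of_le_oplus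
  exact M.triangle w u v

theorem sup_sub (u v : A) : M.sub (M.sup u v) v = M.sub u v := by
  have h1 : M.sup u v = M.oplus v (M.sub u v) := M.oplus_comm _ _
  rw [h1, M.exact_sub (M.sub_le_star u v)]

theorem sup_sub_le (x y z : A) :
    M.le (M.sub (M.sup x y) z) (M.oplus (M.sub x z) (M.sub y z)) := by
  apply M.sub_le_of_le_oplus
  apply M.sup_le
  · refine M.le_trans (M.le_oplus_sub x z) (M.oplus_le_oplus_right ?_ z)
    exact M.le_oplus_right _ _
  · refine M.le_trans (M.le_oplus_sub y z) (M.oplus_le_oplus_right ?_ z)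
    exact M.le_oplus_left _ _

theorem eq_of_sub_eq_zero {x y : A} (h1 : M.sub x y = M.zero) (h2 : M.sub y x = M.zero) :
    x = y := M.le_antisymm (M.le_of_sub_eq_zero h1) (M.le_of_sub_eq_zero h2)

theorem eq_zero_of_idem {a : A} (h1 : M.oplus a a = a) (h2 : M.le a (M.star a)) : a = M.zero := by
  have := M.exact_sub h2
  rw [h1, M.sub_self] at this
  exact this.symm

def nfold (M : MVAlg A) (x : A) : ℕ → A
  | 0 => M.zero
  | (n+1) => M.oplus x (M.nfold x n)

theorem nfold_add (x : A) (m n : ℕ) :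
    M.nfold x (m + n) = M.oplus (M.nfold x m) (M.nfold x n) := by
  induction m with
  | zero => simp [nfold, M.zero_oplus]
  | succ k ih =>
      have : k + 1 + n = (k + n) + 1 := by omega
      rw [this, nfold, ih, nfold, M.oplus_assoc]

theorem le_nfold_one (x : A) {n : ℕ} (h : 1 ≤ n) : M.le x (M.nfold x n) := by
  obtain ⟨k, rfl⟩ := Nat.exists_eq_add_of_le h
  have h1 : 1 + k = k + 1 := by omega
  rw [h1]
  exact M.le_oplus_right x (M.nfold x k)

end MVAlg


-- ====== ideals ======
namespace MVAlg

variable {A : Type u} (M : MVAlg A) {I : Set A}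

theorem mem_of_le (hI : M.IsIdeal I) {x y : A} (h : M.le x y) (hy : y ∈ I) : x ∈ I :=
  hI.2.2 x y h hy

theorem oplus_mem (hI : M.IsIdeal I) {x y : A} (hx : x ∈ I) (hy : y ∈ I) :
    M.oplus x y ∈ I := hI.2.1 x hx y hy

theorem eq_univ_of_one_mem (hI : M.IsIdeal I) (h : M.one ∈ I) : I = Set.univ :=
  Set.eq_univ_of_forall fun x => M.mem_of_le hI (M.le_one x) h

theorem one_notin (hI : M.IsIdeal I) (h : I ≠ Set.univ) : M.one ∉ I :=
  fun hc => h (M.eq_univ_of_one_mem hI hc)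

def leI (M : MVAlg A) (I : Set A) (x y : A) : Prop := M.sub x y ∈ I

theorem leI_refl (hI : M.IsIdeal I) (x : A) : M.leI I x x := by
  show M.sub x x ∈ I; rw [M.sub_self]; exact hI.1

theorem leI_of_le (hI : M.IsIdeal I) {x y : A} (h : M.le x y) : M.leI I x y := by
  show M.sub x y ∈ I; rw [M.sub_eq_zero_of_le h]; exact hI.1

theorem leI_trans (hI : M.IsIdeal I) {x y z : A} (h1 : M.leI I x y) (h2 : M.leI I y z) :
    M.leI I x z :=
  M.mem_of_le hI (M.triangle x y z) (M.oplus_mem hI h1 h2)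

theorem leI_le_trans (hI : M.IsIdeal I) {x y z : A} (h1 : M.leI I x y) (h2 : M.le y z) :
    M.leI I x z := M.mem_of_le hI (M.sub_anti_right h2 x) h1

theorem le_leI_trans (hI : M.IsIdeal I) {x y z : A} (h1 : M.le x y) (h2 : M.leI I y z) :
    M.leI I x z := M.mem_of_le hI (M.sub_mono_left h1 z) h2

theorem leI_oplus (hI : M.IsIdeal I) {a b c d : A} (h1 : M.leI I a c) (h2 : M.leI I b d) :
    M.leI I (M.oplus a b) (M.oplus c d) :=
  M.mem_of_le hI (M.oplus_sub_oplus_le a b c d) (M.oplus_mem hI h1 h2)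

theorem leI_sub_left (hI : M.IsIdeal I) {u v : A} (h : M.leI I u v) (w : A) :
    M.leI I (M.sub u w) (M.sub v w) := M.mem_of_le hI (M.sub_sub_le u v w) h

theorem leI_sub_right (hI : M.IsIdeal I) {u v : A} (h : M.leI I u v) (w : A) :
    M.leI I (M.sub w v) (M.sub w u) := M.mem_of_le hI (M.sub_sub_le' u v w) h

theorem leI_sup (hI : M.IsIdeal I) {x y z : A} (h1 : M.leI I x z) (h2 : M.leI I y z) :
    M.leI I (M.sup x y) z :=
  M.mem_of_le hI (M.sup_sub_le x y z) (M.oplus_mem hI h1 h2)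

theorem mem_of_leI_zero (hI : M.IsIdeal I) {x : A} (h : M.leI I x M.zero) : x ∈ I := by
  have : M.sub x M.zero ∈ I := h
  rwa [M.sub_zero] at this

/-- key step for primality -/
theorem leI_step (hI : M.IsIdeal I) {x s r : A} (hxs : M.le x s)
    (h : M.leI I r (M.sub s x)) : M.leI I x (M.sub s r) := by
  set t := M.sub s x with ht
  have h1 : M.leI I (M.sup r t) t := by
    show M.sub (M.sup r t) t ∈ I
    rw [M.sup_sub]; exact h
  have h2 : M.leI I (M.sub s t) (M.sub s (M.sup r t)) := M.leI_sub_right hI h1 s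
  have h4 : M.sub s t = x := M.sub_sub_cancel hxs
  rw [h4] at h2
  have h5 : M.le (M.sub s (M.sup r t)) (M.sub s r) :=
    M.sub_anti_right (M.le_sup_left r t) s
  exact M.leI_le_trans hI h2 h5

end MVAlg




-- ====== fMV scalar lemmas ======
namespace FMVAlg

variable {A : Type u} (F : FMVAlg A)

abbrev mv : MVAlg A := F.toPMVAlg.toMVAlg

theorem smul_zero' (x : A) : F.smul 0 x = F.mv.zero := by
  obtain ⟨heq, hle⟩ := F.add_smul 0 0 (by norm_num) (by norm_num) (by norm_num) x
  rw [add_zero] at heq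
  exact F.mv.eq_zero_of_idem heq.symm hle

theorem smul_zero_elt (α : ℝ) (hα : α ∈ Set.Icc (0:ℝ) 1) :
    F.smul α F.mv.zero = F.mv.zero := by
  have h1 : F.smul α F.mv.zero = F.smul α (F.smul 0 F.mv.zero) := by rw [F.smul_zero']
  rw [h1, ← F.mul_smul α 0 hα (by norm_num), mul_zero, F.smul_zero']

theorem smul_le_self {α : ℝ} (hα : α ∈ Set.Icc (0:ℝ) 1) (x : A) :
    F.mv.le (F.smul α x) x := by
  obtain ⟨heq, -⟩ := F.add_smul α (1-α)
    hα ⟨by linarith [hα.2], by linarith [hα.1]⟩ (by linarith) x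
  have h1 : α + (1-α) = 1 := by ring
  rw [h1, F.one_smul] at heq
  have := F.mv.le_oplus_right (F.smul α x) (F.smul (1-α) x)
  rwa [← heq] at this

theorem smul_mono_scalar {α β : ℝ} (hα : α ∈ Set.Icc (0:ℝ) 1) (hβ : β ∈ Set.Icc (0:ℝ) 1)
    (h : α ≤ β) (x : A) : F.mv.le (F.smul α x) (F.smul β x) := by
  obtain ⟨heq, -⟩ := F.add_smul α (β - α) hα ⟨by linarith, by linarith [hβ.2, hα.1]⟩
    (by linarith [hβ.2]) x
  have h1 : α + (β - α) = β := by ring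
  rw [h1] at heq
  rw [heq]
  exact F.mv.le_oplus_right _ _

theorem smul_mono {α : ℝ} (hα : α ∈ Set.Icc (0:ℝ) 1) {x y : A} (h : F.mv.le x y) :
    F.mv.le (F.smul α x) (F.smul α y) := by
  have hdec : y = F.mv.oplus x (F.mv.sub y x) := F.mv.eq_oplus_sub_of_le h
  have horth : F.mv.le x (F.mv.star (F.mv.sub y x)) := F.mv.le_star_sub y x
  have hs := F.smul_oplus α hα x (F.mv.sub y x) horth
  rw [← hdec] at hs
  rw [hs]
  exact F.mv.le_oplus_right _ _

theorem smul_subadd {α : ℝ} (hα : α ∈ Set.Icc (0:ℝ) 1) (x y : A) :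
    F.mv.le (F.smul α (F.mv.oplus x y)) (F.mv.oplus (F.smul α x) (F.smul α y)) := by
  have hx : F.mv.le x (F.mv.oplus x y) := F.mv.le_oplus_right x y
  have h1 : F.mv.oplus x y = F.mv.oplus x (F.mv.sub (F.mv.oplus x y) x) := by
    have h := F.mv.sub_oplus_cancel hx
    rw [F.mv.oplus_comm] at h
    exact h.symm
  have horth : F.mv.le x (F.mv.star (F.mv.sub (F.mv.oplus x y) x)) :=
    F.mv.le_star_sub (F.mv.oplus x y) x
  have key : F.smul α (F.mv.oplus x y)
      = F.mv.oplus (F.smul α x) (F.smul α (F.mv.sub (F.mv.oplus x y) x)) := by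
    conv_lhs => rw [h1]
    exact F.smul_oplus α hα x _ horth
  rw [key]
  exact F.mv.oplus_le_oplus_right (F.smul_mono hα (F.mv.oplus_sub_le x y)) _

end FMVAlg

namespace FMVAlg

variable {A : Type u} (F : FMVAlg A)

theorem smul_sub_le {α : ℝ} (hα : α ∈ Set.Icc (0:ℝ) 1) (x y : A) :
    F.mv.le (F.mv.sub (F.smul α x) (F.smul α y)) (F.mv.sub x y) := by
  apply F.mv.sub_le_of_le_oplus
  have h1 : F.mv.le (F.smul α x) (F.smul α (F.mv.oplus y (F.mv.sub x y))) :=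
    F.smul_mono hα (F.mv.le_oplus_sub x y)
  have h2 := F.smul_subadd hα y (F.mv.sub x y)
  have h3 : F.mv.le (F.smul α (F.mv.sub x y)) (F.mv.sub x y) := F.smul_le_self hα _
  exact F.mv.le_trans h1 (F.mv.le_trans h2 (F.mv.oplus_le_oplus_right h3 _))

def rho (α : ℝ) : A := F.smul α F.mv.one

theorem rho_zero : F.rho 0 = F.mv.zero := F.smul_zero' _
theorem rho_one : F.rho 1 = F.mv.one := F.one_smul _

theorem rho_add {α β : ℝ} (hα : α ∈ Set.Icc (0:ℝ) 1) (hβ : β ∈ Set.Icc (0:ℝ) 1)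
    (h : α + β ≤ 1) : F.rho (α + β) = F.mv.oplus (F.rho α) (F.rho β) :=
  (F.add_smul α β hα hβ h F.mv.one).1

theorem rho_orth {α β : ℝ} (hα : α ∈ Set.Icc (0:ℝ) 1) (hβ : β ∈ Set.Icc (0:ℝ) 1)
    (h : α + β ≤ 1) : F.mv.le (F.rho α) (F.mv.star (F.rho β)) :=
  (F.add_smul α β hα hβ h F.mv.one).2

theorem rho_mono {α β : ℝ} (hα : α ∈ Set.Icc (0:ℝ) 1) (hβ : β ∈ Set.Icc (0:ℝ) 1)
    (h : α ≤ β) : F.mv.le (F.rho α) (F.rho β) := F.smul_mono_scalar hα hβ h _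

theorem rho_top {α β : ℝ} (hα : α ∈ Set.Icc (0:ℝ) 1) (hβ : β ∈ Set.Icc (0:ℝ) 1)
    (h : 1 ≤ α + β) : F.mv.oplus (F.rho α) (F.rho β) = F.mv.one := by
  have h1 : F.mv.le (F.rho (1-β)) (F.rho α) :=
    F.rho_mono ⟨by linarith [hβ.2], by linarith [hβ.1]⟩ hα (by linarith)
  have h2 : F.mv.oplus (F.rho (1-β)) (F.rho β) = F.mv.one := by
    have := F.rho_add (α := 1-β) (β := β) ⟨by linarith [hβ.2], by linarith [hβ.1]⟩ hβ
      (by linarith)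
    have h3 : 1 - β + β = 1 := by ring
    rw [h3] at this
    rw [← this, rho_one]
  have h4 : F.mv.le F.mv.one (F.mv.oplus (F.rho α) (F.rho β)) := by
    rw [← h2]
    exact F.mv.oplus_le_oplus_left h1 _
  exact F.mv.one_le h4

theorem rho_star {α : ℝ} (hα : α ∈ Set.Icc (0:ℝ) 1) :
    F.mv.star (F.rho α) = F.rho (1 - α) := by
  have hα' : (1 - α) ∈ Set.Icc (0:ℝ) 1 := ⟨by linarith [hα.2], by linarith [hα.1]⟩
  have h1 : F.mv.oplus (F.rho α) (F.rho (1-α)) = F.mv.one := by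
    have := F.rho_add hα hα' (by linarith)
    have h3 : α + (1 - α) = 1 := by ring
    rw [h3] at this
    rw [← this, rho_one]
  have h2 : F.mv.le (F.rho (1-α)) (F.mv.star (F.rho α)) := by
    have := F.rho_orth hα' hα (by linarith)
    exact this
  have h3 : F.mv.le (F.mv.star (F.rho α)) (F.rho (1-α)) := by
    show F.mv.oplus (F.mv.star (F.mv.star (F.rho α))) (F.rho (1-α)) = F.mv.one
    rw [F.mv.star_star]
    exact h1
  exact F.mv.le_antisymm h3 h2

theorem rho_sub {α β : ℝ} (hα : α ∈ Set.Icc (0:ℝ) 1) (hβ : β ∈ Set.Icc (0:ℝ) 1)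
    (h : β ≤ α) : F.mv.sub (F.rho α) (F.rho β) = F.rho (α - β) := by
  have hab : (α - β) ∈ Set.Icc (0:ℝ) 1 := ⟨by linarith, by linarith [hα.2, hβ.1]⟩
  have hd : F.rho α = F.mv.oplus (F.rho β) (F.rho (α - β)) := by
    have h4 := F.rho_add (α := β) (β := α - β) hβ hab (by linarith [hα.2])
    have h3 : β + (α - β) = α := by ring
    rw [h3] at h4
    exact h4
  have horth : F.mv.le (F.rho (α - β)) (F.mv.star (F.rho β)) :=
    F.rho_orth (α := α - β) (β := β) hab hβ (by linarith [hα.2])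
  rw [hd, F.mv.exact_sub horth]

theorem smul_smul' {α β : ℝ} (hα : α ∈ Set.Icc (0:ℝ) 1) (hβ : β ∈ Set.Icc (0:ℝ) 1) (x : A) :
    F.smul α (F.smul β x) = F.smul (α * β) x := (F.mul_smul α β hα hβ x).symm

theorem rho_mul {α β : ℝ} (hα : α ∈ Set.Icc (0:ℝ) 1) (hβ : β ∈ Set.Icc (0:ℝ) 1) :
    F.mul (F.rho α) (F.rho β) = F.rho (α * β) := by
  have h1 : F.mul (F.smul α F.mv.one) (F.rho β) = F.smul α (F.mul F.mv.one (F.rho β)) :=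
    (F.smul_mul_left α hα F.mv.one (F.rho β)).symm
  have h2 : F.mul F.mv.one (F.rho β) = F.rho β := by
    rw [F.mul_comm]
    exact F.mul_one _
  have h3 : F.smul α (F.rho β) = F.rho (α*β) := by
    show F.smul α (F.smul β F.mv.one) = F.smul (α*β) F.mv.one
    exact F.smul_smul' hα hβ _
  calc F.mul (F.rho α) (F.rho β) = F.smul α (F.mul F.mv.one (F.rho β)) := h1
    _ = F.smul α (F.rho β) := by rw [h2]
    _ = F.rho (α*β) := h3

theorem mul_mono_left {x x' : A} (h : F.mv.le x x') (y : A) :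
    F.mv.le (F.mul x y) (F.mul x' y) := by
  have hd : x' = F.mv.oplus x (F.mv.sub x' x) := F.mv.eq_oplus_sub_of_le h
  have horth : F.mv.le x (F.mv.star (F.mv.sub x' x)) := F.mv.le_star_sub x' x
  have hl := F.mul_linear_left x (F.mv.sub x' x) y horth
  rw [← hd] at hl
  rw [hl]
  exact F.mv.le_oplus_right _ _

theorem mul_mono_right {y y' : A} (h : F.mv.le y y') (x : A) :
    F.mv.le (F.mul x y) (F.mul x y') := by
  rw [F.mul_comm x y, F.mul_comm x y']
  exact F.mul_mono_left h x

theorem mul_le_left (x y : A) : F.mv.le (F.mul x y) x := by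
  have h := F.mul_mono_right (F.mv.le_one y) x
  rwa [F.mul_one] at h

theorem mul_sub_le (x c b : A) :
    F.mv.le (F.mv.sub (F.mul x b) (F.mul c b)) (F.mv.sub x c) := by
  apply F.mv.sub_le_of_le_oplus
  have h2 : F.mv.le (F.mul x b) (F.mul (F.mv.oplus c (F.mv.sub x c)) b) :=
    F.mul_mono_left (F.mv.le_oplus_sub x c) b
  rw [F.mul_linear_left c (F.mv.sub x c) b (F.mv.le_star_sub x c)] at h2
  exact F.mv.le_trans h2 (F.mv.oplus_le_oplus_right (F.mul_le_left _ b) _)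

theorem nfold_smul_exact (x : A) (n : ℕ) (hn : 1 ≤ n) :
    ∀ k : ℕ, k ≤ n → F.mv.nfold (F.smul (1/(n:ℝ)) x) k = F.smul ((k:ℝ)/(n:ℝ)) x := by
  have hnR : (1:ℝ) ≤ (n:ℝ) := by exact_mod_cast hn
  intro k
  induction k with
  | zero =>
      intro _
      show F.mv.zero = _
      rw [show ((0:ℕ):ℝ)/(n:ℝ) = 0 by norm_num, F.smul_zero']
  | succ k ih =>
      intro hk
      have hk' : k ≤ n := by omega
      have hkR : (k:ℝ) + 1 ≤ (n:ℝ) := by exact_mod_cast hk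
      have h1n : (1:ℝ)/(n:ℝ) ∈ Set.Icc (0:ℝ) 1 := by
        constructor
        · positivity
        · rw [div_le_one (by linarith)]; linarith
      have hkn : (k:ℝ)/(n:ℝ) ∈ Set.Icc (0:ℝ) 1 := by
        constructor
        · positivity
        · rw [div_le_one (by linarith)]; linarith
      have hsum : (1:ℝ)/(n:ℝ) + (k:ℝ)/(n:ℝ) ≤ 1 := by
        rw [← add_div, div_le_one (by linarith)]; linarith
      have hadd := (F.add_smul ((1:ℝ)/(n:ℝ)) ((k:ℝ)/(n:ℝ)) h1n hkn hsum x).1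
      show F.mv.oplus (F.smul (1/(n:ℝ)) x) (F.mv.nfold (F.smul (1/(n:ℝ)) x) k) = _
      rw [ih hk', ← hadd]
      congr 1
      push_cast
      ring

theorem smul_nfold_le {α : ℝ} (hα : α ∈ Set.Icc (0:ℝ) 1) (x : A) (k : ℕ) :
    F.mv.le (F.smul α (F.mv.nfold x k)) (F.mv.nfold (F.smul α x) k) := by
  induction k with
  | zero =>
      show F.mv.le (F.smul α F.mv.zero) F.mv.zero
      rw [F.smul_zero_elt α hα]
      exact F.mv.le_refl _
  | succ k ih =>
      show F.mv.le (F.smul α (F.mv.oplus x (F.mv.nfold x k)))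
        (F.mv.oplus (F.smul α x) (F.mv.nfold (F.smul α x) k))
      refine F.mv.le_trans (F.smul_subadd hα x (F.mv.nfold x k)) ?_
      exact F.mv.oplus_le_oplus_right ih _

theorem smul_inv_nfold_le (x : A) {n : ℕ} (hn : 1 ≤ n) :
    F.mv.le (F.smul (1/(n:ℝ)) (F.mv.nfold x n)) x := by
  have hnR : (1:ℝ) ≤ (n:ℝ) := by exact_mod_cast hn
  have h1n : (1:ℝ)/(n:ℝ) ∈ Set.Icc (0:ℝ) 1 := by
    constructor
    · positivity
    · rw [div_le_one (by linarith)]; linarith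
  refine F.mv.le_trans (F.smul_nfold_le h1n x n) ?_
  rw [F.nfold_smul_exact x n hn n le_rfl, div_self (by linarith : (n:ℝ) ≠ 0), F.one_smul]
  exact F.mv.le_refl x

theorem nfold_rho {ε : ℝ} (hε : ε ∈ Set.Icc (0:ℝ) 1) (k : ℕ) :
    F.mv.nfold (F.rho ε) k = F.rho (min 1 ((k:ℝ) * ε)) := by
  induction k with
  | zero =>
      show F.mv.zero = _
      rw [show min (1:ℝ) (((0:ℕ):ℝ) * ε) = 0 by simp [min_eq_right hε.1, hε.1], F.rho_zero]
  | succ k ih =>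
      show F.mv.oplus (F.rho ε) (F.mv.nfold (F.rho ε) k) = _
      rw [ih]
      have hkc : ((k+1 : ℕ):ℝ) = (k:ℝ) + 1 := by push_cast; ring
      have hke : (0:ℝ) ≤ (k:ℝ) * ε := mul_nonneg (Nat.cast_nonneg k) hε.1
      rcases le_or_gt ((k:ℝ) * ε + ε) 1 with h | h
      · have hk1 : (k:ℝ) * ε ≤ 1 := by linarith [hε.1]
        have hkIcc : (k:ℝ) * ε ∈ Set.Icc (0:ℝ) 1 := ⟨hke, hk1⟩
        rw [min_eq_right hk1, hkc, min_eq_right (by linarith : ((k:ℝ)+1) * ε ≤ 1)]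
        have h4 := F.rho_add (α := ε) (β := (k:ℝ) * ε) hε hkIcc (by linarith)
        rw [← h4]
        congr 1
        ring
      · rw [hkc, min_eq_left (by nlinarith : (1:ℝ) ≤ ((k:ℝ)+1) * ε), rho_one]
        rcases le_or_gt 1 ((k:ℝ) * ε) with h2 | h2
        · rw [min_eq_left h2, rho_one, F.mv.oplus_one']
        · rw [min_eq_right (le_of_lt h2)]
          exact F.rho_top hε ⟨hke, le_of_lt h2⟩ (by linarith)

end FMVAlg

namespace FMVAlg

variable {A : Type u} (F : FMVAlg A) {M : Set A}

theorem icc_one_div' {n : ℕ} (hn : 1 ≤ n) : (1:ℝ)/(n:ℝ) ∈ Set.Icc (0:ℝ) 1 := by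
  have hnR : (1:ℝ) ≤ (n:ℝ) := by exact_mod_cast hn
  constructor
  · positivity
  · rw [div_le_one (by linarith)]; linarith

theorem smul_mem (hI : F.mv.IsIdeal M) {α : ℝ} {x : A} (hα : α ∈ Set.Icc (0:ℝ) 1)
    (hx : x ∈ M) : F.smul α x ∈ M :=
  F.mv.mem_of_le hI (F.smul_le_self hα x) hx

theorem exists_rho_leI (hM : F.mv.IsMaximalIdeal M) {x : A} (hx : x ∉ M) :
    ∃ n : ℕ, 1 ≤ n ∧ F.mv.sub (F.rho (1/(n:ℝ))) x ∈ M := by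
  classical
  set G : Set A := {t | ∃ m ∈ M, ∃ n : ℕ, F.mv.le t (F.mv.oplus m (F.mv.nfold x n))} with hG
  have hGI : F.mv.IsIdeal G := by
    refine ⟨⟨F.mv.zero, hM.1.1, 0, F.mv.zero_le _⟩, ?_, ?_⟩
    · rintro a ⟨m, hm, n, hn⟩ b ⟨m', hm', n', hn'⟩
      refine ⟨F.mv.oplus m m', F.mv.oplus_mem hM.1 hm hm', n + n', ?_⟩
      have h1 := F.mv.oplus_le_oplus hn hn'
      have he : F.mv.oplus (F.mv.oplus m (F.mv.nfold x n)) (F.mv.oplus m' (F.mv.nfold x n'))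
          = F.mv.oplus (F.mv.oplus m m') (F.mv.nfold x (n+n')) := by
        rw [F.mv.nfold_add]; ac_rfl
      rw [he] at h1
      exact h1
    · rintro a b hab ⟨m, hm, n, hn⟩
      exact ⟨m, hm, n, F.mv.le_trans hab hn⟩
  have hMG : M ⊆ G := fun m hm => ⟨m, hm, 0, F.mv.le_oplus_right m _⟩
  have hxG : x ∈ G := by
    refine ⟨F.mv.zero, hM.1.1, 1, ?_⟩
    show F.mv.le x (F.mv.oplus F.mv.zero (F.mv.oplus x F.mv.zero))
    rw [F.mv.zero_oplus, F.mv.oplus_zero]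
    exact F.mv.le_refl x
  have hGU : G = Set.univ := by
    by_contra hne
    have hGM := hM.2.2 G hGI hne hMG
    exact hx (hGM ▸ hxG)
  have hone : F.mv.one ∈ G := hGU ▸ Set.mem_univ _
  obtain ⟨m, hm, n, honem⟩ := hone
  rcases Nat.eq_zero_or_pos n with rfl | hn1
  · exfalso
    have h2 : F.mv.le F.mv.one m := by
      have : F.mv.oplus m (F.mv.nfold x 0) = m := F.mv.oplus_zero m
      rwa [this] at honem
    exact F.mv.one_notin hM.1 hM.2.1 (F.mv.mem_of_le hM.1 h2 hm)
  · refine ⟨n, hn1, ?_⟩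
    set w := F.mv.nfold x n with hw
    have h1n := icc_one_div' hn1
    have hsw : F.mv.star w ∈ M := by
      have h1 : F.mv.le (F.mv.sub F.mv.one w) m := by
        apply F.mv.sub_le_of_le_oplus
        rwa [F.mv.oplus_comm w m]
      rw [F.mv.one_sub] at h1
      exact F.mv.mem_of_le hM.1 h1 hm
    have h2 : F.mv.le (F.rho (1/(n:ℝ))) (F.mv.oplus x (F.smul (1/(n:ℝ)) (F.mv.star w))) := by
      have e1 : F.mv.oplus w (F.mv.star w) = F.mv.one := F.mv.oplus_star_self w
      have e2 : F.rho (1/(n:ℝ)) = F.smul (1/(n:ℝ)) (F.mv.oplus w (F.mv.star w)) := by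
        rw [e1]; rfl
      rw [e2]
      refine F.mv.le_trans (F.smul_subadd h1n w (F.mv.star w)) ?_
      exact F.mv.oplus_le_oplus_left (F.smul_inv_nfold_le x hn1) _
    have h3 : F.mv.le (F.mv.sub (F.rho (1/(n:ℝ))) x) (F.smul (1/(n:ℝ)) (F.mv.star w)) :=
      F.mv.sub_le_of_le_oplus h2
    exact F.mv.mem_of_le hM.1 h3 (F.smul_mem hM.1 h1n hsw)

theorem prime (hM : F.mv.IsMaximalIdeal M) (x y : A) :
    F.mv.sub x y ∈ M ∨ F.mv.sub y x ∈ M := by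
  by_contra hc
  push_neg at hc
  obtain ⟨ha, hb⟩ := hc
  obtain ⟨n1, hn1, hA⟩ := F.exists_rho_leI hM ha
  obtain ⟨n2, hn2, hB⟩ := F.exists_rho_leI hM hb
  set n := max n1 n2 with hn
  have hn1' : 1 ≤ n := le_trans hn1 (le_max_left _ _)
  have hnR : (1:ℝ) ≤ (n:ℝ) := by exact_mod_cast hn1'
  have hinv : ∀ m : ℕ, 1 ≤ m → m ≤ n → F.mv.le (F.rho (1/(n:ℝ))) (F.rho (1/(m:ℝ))) := by
    intro m hm1 hmn
    have hmR : (1:ℝ) ≤ (m:ℝ) := by exact_mod_cast hm1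
    refine F.rho_mono (icc_one_div' hn1') (icc_one_div' hm1) ?_
    apply one_div_le_one_div_of_le (by linarith)
    exact_mod_cast hmn
  have hA' : F.mv.sub (F.rho (1/(n:ℝ))) (F.mv.sub x y) ∈ M :=
    F.mv.mem_of_le hM.1 (F.mv.sub_mono_left (hinv n1 hn1 (le_max_left _ _)) _) hA
  have hB' : F.mv.sub (F.rho (1/(n:ℝ))) (F.mv.sub y x) ∈ M :=
    F.mv.mem_of_le hM.1 (F.mv.sub_mono_left (hinv n2 hn2 (le_max_right _ _)) _) hB
  set s := F.mv.sup x y with hs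
  have hsx : F.mv.sub s x = F.mv.sub y x := by
    rw [hs, F.mv.sup_comm, F.mv.sup_sub]
  have hsy : F.mv.sub s y = F.mv.sub x y := F.mv.sup_sub x y
  have hx2 : F.mv.sub x (F.mv.sub s (F.rho (1/(n:ℝ)))) ∈ M := by
    have := F.mv.leI_step hM.1 (F.mv.le_sup_left x y : F.mv.le x s) (by
      show F.mv.sub (F.rho (1/(n:ℝ))) (F.mv.sub s x) ∈ M
      rw [hsx]; exact hB')
    exact this
  have hy2 : F.mv.sub y (F.mv.sub s (F.rho (1/(n:ℝ)))) ∈ M := by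
    have := F.mv.leI_step hM.1 (F.mv.le_sup_right x y : F.mv.le y s) (by
      show F.mv.sub (F.rho (1/(n:ℝ))) (F.mv.sub s y) ∈ M
      rw [hsy]; exact hA')
    exact this
  have hs2 : F.mv.sub s (F.mv.sub s (F.rho (1/(n:ℝ)))) ∈ M :=
    F.mv.leI_sup hM.1 hx2 hy2
  have hiter : ∀ k : ℕ, k ≤ n → F.mv.sub s (F.mv.sub s (F.rho ((k:ℝ)/(n:ℝ)))) ∈ M := by
    intro k
    induction k with
    | zero =>
        intro _
        rw [show ((0:ℕ):ℝ)/(n:ℝ) = 0 by norm_num, F.rho_zero, F.mv.sub_zero, F.mv.sub_self]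
        exact hM.1.1
    | succ k ih =>
        intro hk
        have hk' : k ≤ n := by omega
        have ihk := ih hk'
        have hkI : (k:ℝ)/(n:ℝ) ∈ Set.Icc (0:ℝ) 1 := by
          constructor
          · positivity
          · rw [div_le_one (by linarith)]; exact_mod_cast hk'
        have hstep : F.mv.sub (F.mv.sub s (F.rho ((k:ℝ)/(n:ℝ))))
            (F.mv.sub s (F.rho (((k+1:ℕ):ℝ)/(n:ℝ)))) ∈ M := by
          have h5 := F.mv.leI_sub_left hM.1
            (show F.mv.leI M s (F.mv.sub s (F.rho (1/(n:ℝ)))) from hs2) (F.rho ((k:ℝ)/(n:ℝ)))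
          show F.mv.sub _ _ ∈ M
          have h6 : F.mv.sub (F.mv.sub s (F.rho (1/(n:ℝ)))) (F.rho ((k:ℝ)/(n:ℝ)))
              = F.mv.sub s (F.rho (((k+1:ℕ):ℝ)/(n:ℝ))) := by
            rw [F.mv.sub_sub, ← F.rho_add (icc_one_div' hn1') hkI (by
              rw [← add_div, div_le_one (by linarith)]
              have : (1:ℝ) + (k:ℝ) ≤ (n:ℝ) := by
                have : k + 1 ≤ n := hk
                have h7 : ((k:ℝ)) + 1 ≤ (n:ℝ) := by exact_mod_cast this
                linarith
              linarith)]
            congr 1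
            push_cast
            ring
          rw [h6] at h5
          exact h5
        exact F.mv.leI_trans hM.1 ihk hstep
  have hfin := hiter n le_rfl
  rw [div_self (by linarith : (n:ℝ) ≠ 0), F.rho_one, F.mv.sub_one, F.mv.sub_zero] at hfin
  refine ha (F.mv.mem_of_le hM.1 ?_ hfin)
  exact F.mv.le_trans (F.mv.sub_le_left x y) (F.mv.le_sup_left x y)

end FMVAlg

namespace MVAlg
variable {A : Type u} (M : MVAlg A)

theorem sub_star_comm (a b : A) : M.sub a (M.star b) = M.sub b (M.star a) := by
  show M.star (M.oplus (M.star a) (M.star b)) = M.star (M.oplus (M.star b) (M.star a))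
  rw [M.oplus_comm]

theorem nfold_mem {I : Set A} (hI : M.IsIdeal I) {x : A} (hx : x ∈ I) (k : ℕ) :
    M.nfold x k ∈ I := by
  induction k with
  | zero => exact hI.1
  | succ k ih => exact M.oplus_mem hI hx ih

end MVAlg

namespace FMVAlg

variable {A : Type u} (F : FMVAlg A) (M : Set A)

def SSet (x : A) : Set ℝ := {α | α ∈ Set.Icc (0:ℝ) 1 ∧ F.mv.sub (F.rho α) x ∈ M}

noncomputable def hval (x : A) : ℝ := sSup (F.SSet M x)

variable {F M}

theorem zero_mem_SSet (hI : F.mv.IsIdeal M) (x : A) : 0 ∈ F.SSet M x :=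
  ⟨⟨le_rfl, zero_le_one⟩, by rw [F.rho_zero, F.mv.zero_sub]; exact hI.1⟩

theorem SSet_nonempty (hI : F.mv.IsIdeal M) (x : A) : (F.SSet M x).Nonempty :=
  ⟨0, zero_mem_SSet hI x⟩

theorem bddAbove_SSet (x : A) : BddAbove (F.SSet M x) :=
  ⟨1, fun _ hγ => hγ.1.2⟩

theorem hval_nonneg (hI : F.mv.IsIdeal M) (x : A) : 0 ≤ F.hval M x :=
  le_csSup (bddAbove_SSet x) (zero_mem_SSet hI x)

theorem hval_le_one (hI : F.mv.IsIdeal M) (x : A) : F.hval M x ≤ 1 :=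
  csSup_le (SSet_nonempty hI x) (fun _ hγ => hγ.1.2)

theorem hval_mem_Icc (hI : F.mv.IsIdeal M) (x : A) : F.hval M x ∈ Set.Icc (0:ℝ) 1 :=
  ⟨hval_nonneg hI x, hval_le_one hI x⟩

theorem rho_notin (hM : F.mv.IsMaximalIdeal M) {α : ℝ} (hα : α ∈ Set.Icc (0:ℝ) 1)
    (h : 0 < α) : F.rho α ∉ M := by
  intro hmem
  obtain ⟨n, hn⟩ := exists_nat_ge (1/α)
  have hn1 : (1:ℝ) ≤ (n:ℝ) * α := by
    rw [div_le_iff₀ h] at hn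
    linarith
  have h2 : F.mv.nfold (F.rho α) n ∈ M := F.mv.nfold_mem hM.1 hmem n
  rw [F.nfold_rho hα, min_eq_left hn1, F.rho_one] at h2
  exact F.mv.one_notin hM.1 hM.2.1 h2

theorem mem_of_lt_hval (hM : F.mv.IsMaximalIdeal M) {α : ℝ} {x : A}
    (hα : α ∈ Set.Icc (0:ℝ) 1) (h : α < F.hval M x) : F.mv.sub (F.rho α) x ∈ M := by
  obtain ⟨β, hβ, hαβ⟩ := exists_lt_of_lt_csSup (SSet_nonempty hM.1 x) h
  exact F.mv.mem_of_le hM.1 (F.mv.sub_mono_left (F.rho_mono hα hβ.1 hαβ.le) x) hβ.2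

theorem le_hval_of_mem (hM : F.mv.IsMaximalIdeal M) {α : ℝ} {x : A}
    (hα : α ∈ Set.Icc (0:ℝ) 1) (h : F.mv.sub (F.rho α) x ∈ M) : α ≤ F.hval M x :=
  le_csSup (bddAbove_SSet x) ⟨hα, h⟩

theorem hval_le_of_leM (hM : F.mv.IsMaximalIdeal M) {β : ℝ} {x : A}
    (hβ : β ∈ Set.Icc (0:ℝ) 1) (h : F.mv.sub x (F.rho β) ∈ M) : F.hval M x ≤ β := by
  apply csSup_le (SSet_nonempty hM.1 x)
  intro γ hγ
  have h2 : F.mv.sub (F.rho γ) (F.rho β) ∈ M := F.mv.leI_trans hM.1 hγ.2 h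
  by_contra hc
  push_neg at hc
  rw [F.rho_sub hγ.1 hβ hc.le] at h2
  exact rho_notin hM ⟨by linarith, by linarith [hγ.1.2, hβ.1]⟩ (by linarith) h2

theorem leM_of_hval_lt (hM : F.mv.IsMaximalIdeal M) {β : ℝ} {x : A}
    (hβ : β ∈ Set.Icc (0:ℝ) 1) (h : F.hval M x < β) : F.mv.sub x (F.rho β) ∈ M := by
  rcases F.prime hM (F.rho β) x with h1 | h1
  · exact absurd (le_hval_of_mem hM hβ h1) (not_le.mpr h)
  · exact h1

theorem hval_of_mem (hM : F.mv.IsMaximalIdeal M) {x : A} (hx : x ∈ M) : F.hval M x = 0 := by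
  refine le_antisymm ?_ (hval_nonneg hM.1 x)
  apply csSup_le (SSet_nonempty hM.1 x)
  intro γ hγ
  by_contra hc
  push_neg at hc
  have h2 : F.rho γ ∈ M := by
    refine F.mv.mem_of_le hM.1 (F.mv.le_oplus_sub (F.rho γ) x) ?_
    exact F.mv.oplus_mem hM.1 hx hγ.2
  exact rho_notin hM hγ.1 hc h2

theorem hval_pos_of_notin (hM : F.mv.IsMaximalIdeal M) {x : A} (hx : x ∉ M) :
    0 < F.hval M x := by
  obtain ⟨n, hn1, h⟩ := F.exists_rho_leI hM hx
  have hnR : (1:ℝ) ≤ (n:ℝ) := by exact_mod_cast hn1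
  have := le_hval_of_mem hM (icc_one_div' hn1) h
  have hpos : (0:ℝ) < 1/(n:ℝ) := by positivity
  linarith

theorem hval_rho (hM : F.mv.IsMaximalIdeal M) {α : ℝ} (hα : α ∈ Set.Icc (0:ℝ) 1) :
    F.hval M (F.rho α) = α := by
  refine le_antisymm (hval_le_of_leM hM hα ?_) (le_hval_of_mem hM hα ?_) <;>
    (rw [F.mv.sub_self]; exact hM.1.1)

theorem hval_mono (hM : F.mv.IsMaximalIdeal M) {x y : A} (h : F.mv.le x y) :
    F.hval M x ≤ F.hval M y := by
  apply csSup_le (SSet_nonempty hM.1 x)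
  intro γ hγ
  exact le_hval_of_mem hM hγ.1 (F.mv.leI_le_trans hM.1 hγ.2 h)

theorem hval_one (hM : F.mv.IsMaximalIdeal M) : F.hval M F.mv.one = 1 := by
  have := hval_rho hM (⟨zero_le_one, le_rfl⟩ : (1:ℝ) ∈ Set.Icc (0:ℝ) 1)
  rwa [F.rho_one] at this

theorem hval_star (hM : F.mv.IsMaximalIdeal M) (x : A) :
    F.hval M (F.mv.star x) = 1 - F.hval M x := by
  have key : ∀ β ∈ F.SSet M (F.mv.star x), F.mv.sub x (F.rho (1-β)) ∈ M := by
    intro β hβ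
    have h1 : F.mv.sub (F.rho β) (F.mv.star x) ∈ M := hβ.2
    rw [F.mv.sub_star_comm (F.rho β) x] at h1
    cases' hβ with hβI hβ2
    rwa [F.rho_star hβI] at h1
  refine le_antisymm ?_ ?_
  · apply csSup_le (SSet_nonempty hM.1 _)
    intro β hβ
    have h2 := hval_le_of_leM hM
      ⟨by linarith [hβ.1.2], by linarith [hβ.1.1]⟩ (key β hβ)
    linarith
  · by_contra hc
    push_neg at hc
    set t := F.hval M x with ht
    set b := F.hval M (F.mv.star x) with hb
    have htI := hval_mem_Icc hM.1 x
    have hbI := hval_mem_Icc hM.1 (F.mv.star x)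
    set β := (b + (1 - t))/2 with hβ
    have hβ1 : b < β := by rw [hβ]; linarith
    have hβ2 : β < 1 - t := by rw [hβ]; linarith
    have hβI : β ∈ Set.Icc (0:ℝ) 1 := ⟨by linarith [hbI.1], by linarith [htI.1]⟩
    have h3 : F.mv.sub x (F.rho (1-β)) ∈ M :=
      leM_of_hval_lt hM ⟨by linarith [hβI.2], by linarith [hβI.1]⟩ (by linarith)
    have h4 : F.mv.sub (F.rho β) (F.mv.star x) ∈ M := by
      rw [← F.rho_star hβI] at h3
      rw [F.mv.sub_star_comm]
      exact h3
    exact absurd (le_hval_of_mem hM hβI h4) (not_le.mpr hβ1)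

end FMVAlg

namespace FMVAlg

variable {A : Type u} {F : FMVAlg A} {M : Set A}

theorem oplus_mem_SSet (hM : F.mv.IsMaximalIdeal M) {x y : A} {α β : ℝ}
    (hα : α ∈ F.SSet M x) (hβ : β ∈ F.SSet M y) :
    min 1 (α + β) ∈ F.SSet M (F.mv.oplus x y) := by
  obtain ⟨hαI, hα2⟩ := hα
  obtain ⟨hβI, hβ2⟩ := hβ
  have hIcc : min 1 (α + β) ∈ Set.Icc (0:ℝ) 1 :=
    ⟨le_min zero_le_one (by linarith [hαI.1, hβI.1]), min_le_left _ _⟩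
  have hrho : F.rho (min 1 (α+β)) = F.mv.oplus (F.rho α) (F.rho β) := by
    rcases le_total (α+β) 1 with h' | h'
    · rw [min_eq_right h', F.rho_add hαI hβI h']
    · rw [min_eq_left h', F.rho_one, F.rho_top hαI hβI h']
  refine ⟨hIcc, ?_⟩
  rw [hrho]
  exact F.mv.mem_of_le hM.1 (F.mv.oplus_sub_oplus_le _ _ _ _) (F.mv.oplus_mem hM.1 hα2 hβ2)

theorem hval_oplus (hM : F.mv.IsMaximalIdeal M) (x y : A) :
    F.hval M (F.mv.oplus x y) = min 1 (F.hval M x + F.hval M y) := by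
  set t := F.hval M x with ht
  set u := F.hval M y with hu
  set s := F.hval M (F.mv.oplus x y) with hs
  have htI := hval_mem_Icc hM.1 x
  have huI := hval_mem_Icc hM.1 y
  have hsI := hval_mem_Icc hM.1 (F.mv.oplus x y)
  refine le_antisymm ?_ ?_
  · -- s ≤ min 1 (t+u)
    refine le_min hsI.2 ?_
    by_contra hc
    push_neg at hc
    set D := s - (t + u) with hD
    have hD0 : 0 < D := by linarith
    have htu1 : t + u < 1 := by linarith [hsI.2]
    set δ := min (D/4) ((1 - (t+u))/2) with hδ
    have hδ0 : 0 < δ := by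
      apply lt_min (by linarith)
      linarith
    have hδ1 : δ ≤ D/4 := min_le_left _ _
    have hδ2 : δ ≤ (1 - (t+u))/2 := min_le_right _ _
    have hαI : t + δ ∈ Set.Icc (0:ℝ) 1 := ⟨by linarith [htI.1], by linarith [huI.1]⟩
    have hβI : u + δ ∈ Set.Icc (0:ℝ) 1 := ⟨by linarith [huI.1], by linarith [htI.1]⟩
    have h1 : F.mv.sub x (F.rho (t+δ)) ∈ M := leM_of_hval_lt hM hαI (by linarith)
    have h2 : F.mv.sub y (F.rho (u+δ)) ∈ M := leM_of_hval_lt hM hβI (by linarith)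
    have h3 : F.mv.sub (F.mv.oplus x y) (F.mv.oplus (F.rho (t+δ)) (F.rho (u+δ))) ∈ M :=
      F.mv.leI_oplus hM.1 h1 h2
    rw [← F.rho_add hαI hβI (by linarith)] at h3
    have h4 := hval_le_of_leM hM ⟨by linarith [htI.1, huI.1], by linarith⟩ h3
    rw [← hs] at h4
    linarith
  · -- min 1 (t+u) ≤ s
    by_contra hc
    push_neg at hc
    set D := min 1 (t+u) - s with hD
    have hD0 : 0 < D := by linarith
    have hδ0 : (0:ℝ) < D/4 := by linarith
    obtain ⟨α, hαS, hα⟩ := exists_lt_of_lt_csSup (SSet_nonempty hM.1 x)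
      (show t - D/4 < t by linarith)
    obtain ⟨β, hβS, hβ⟩ := exists_lt_of_lt_csSup (SSet_nonempty hM.1 y)
      (show u - D/4 < u by linarith)
    have hmem := oplus_mem_SSet hM hαS hβS
    have h5 : min 1 (α + β) ≤ s := le_csSup (bddAbove_SSet _) hmem
    have h6 : s < min 1 (α + β) := by
      rcases le_total 1 (α+β) with h' | h'
      · rw [min_eq_left h']
        have := min_le_left 1 (t+u)
        linarith
      · rw [min_eq_right h']
        have := min_le_right 1 (t+u)
        linarith
    linarith

theorem mul_leM (hM : F.mv.IsMaximalIdeal M) {a b c d : A}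
    (h1 : F.mv.sub a c ∈ M) (h2 : F.mv.sub b d ∈ M) :
    F.mv.sub (F.mul a b) (F.mul c d) ∈ M := by
  have s1 : F.mv.sub (F.mul a b) (F.mul c b) ∈ M :=
    F.mv.mem_of_le hM.1 (F.mul_sub_le a c b) h1
  have s2 : F.mv.sub (F.mul c b) (F.mul c d) ∈ M := by
    have := F.mv.mem_of_le hM.1 (F.mul_sub_le b d c) h2
    rwa [F.mul_comm b c, F.mul_comm d c] at this
  exact F.mv.leI_trans hM.1 s1 s2

theorem hval_mul (hM : F.mv.IsMaximalIdeal M) (x y : A) :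
    F.hval M (F.mul x y) = F.hval M x * F.hval M y := by
  have htI := hval_mem_Icc hM.1 x
  have huI := hval_mem_Icc hM.1 y
  have hPI := hval_mem_Icc hM.1 (F.mul x y)
  refine le_antisymm ?_ ?_
  · -- P ≤ t * u
    rcases eq_or_lt_of_le htI.2 with h1 | h1
    · -- t = 1
      have hle : F.mv.le (F.mul x y) y := by
        rw [F.mul_comm]; exact F.mul_le_left y x
      have h3 := hval_mono hM hle
      rw [h1, one_mul]
      exact h3
    rcases eq_or_lt_of_le huI.2 with h2 | h2
    · -- u = 1
      have hle : F.mv.le (F.mul x y) x := F.mul_le_left x y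
      have h3 := hval_mono hM hle
      rw [h2, mul_one]
      exact h3
    set t := F.hval M x with ht
    set u := F.hval M y with hu
    set P := F.hval M (F.mul x y) with hP
    by_contra hc
    push_neg at hc
    set D := P - t * u with hD
    have hD0 : 0 < D := by linarith
    set δ := min (min ((1-t)/2) ((1-u)/2)) (D/8) with hδ
    have hδ0 : 0 < δ := by
      apply lt_min (lt_min (by linarith) (by linarith)); linarith
    have hδt : δ ≤ (1-t)/2 := le_trans (min_le_left _ _) (min_le_left _ _)
    have hδu : δ ≤ (1-u)/2 := le_trans (min_le_left _ _) (min_le_right _ _)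
    have hδD : δ ≤ D/8 := min_le_right _ _
    have hδ1 : δ ≤ 1 := by linarith [htI.1]
    have hαI : t + δ ∈ Set.Icc (0:ℝ) 1 := ⟨by linarith [htI.1], by linarith⟩
    have hβI : u + δ ∈ Set.Icc (0:ℝ) 1 := ⟨by linarith [huI.1], by linarith⟩
    have h3 : F.mv.sub x (F.rho (t+δ)) ∈ M := leM_of_hval_lt hM hαI (by linarith)
    have h4 : F.mv.sub y (F.rho (u+δ)) ∈ M := leM_of_hval_lt hM hβI (by linarith)
    have h5 := mul_leM hM h3 h4
    rw [F.rho_mul hαI hβI] at h5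
    have h6 := hval_le_of_leM hM
      ⟨mul_nonneg (by linarith [htI.1]) (by linarith [huI.1]),
       mul_le_one₀ hαI.2 (by linarith [huI.1]) hβI.2⟩ h5
    nlinarith [htI.1, huI.1]
  · -- t * u ≤ P
    set t := F.hval M x with ht
    set u := F.hval M y with hu
    set P := F.hval M (F.mul x y) with hP
    by_contra hc
    push_neg at hc
    have hP0 : 0 ≤ P := hPI.1
    have ht0 : 0 < t := by nlinarith [huI.2, htI.1, huI.1]
    have hu0 : 0 < u := by nlinarith [htI.2, htI.1, huI.1]
    set D := t * u - P with hD
    have hD0 : 0 < D := by linarith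
    set δ := min (min (t/2) (u/2)) (D/4) with hδ
    have hδ0 : 0 < δ := by
      apply lt_min (lt_min (by linarith) (by linarith)); linarith
    have hδt : δ ≤ t/2 := le_trans (min_le_left _ _) (min_le_left _ _)
    have hδu : δ ≤ u/2 := le_trans (min_le_left _ _) (min_le_right _ _)
    have hδD : δ ≤ D/4 := min_le_right _ _
    obtain ⟨α, hαS, hα⟩ := exists_lt_of_lt_csSup (SSet_nonempty hM.1 x)
      (show t - δ < t by linarith)
    obtain ⟨β, hβS, hβ⟩ := exists_lt_of_lt_csSup (SSet_nonempty hM.1 y)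
      (show u - δ < u by linarith)
    have hmem : α * β ∈ F.SSet M (F.mul x y) := by
      refine ⟨⟨mul_nonneg hαS.1.1 hβS.1.1, mul_le_one₀ hαS.1.2 hβS.1.1 hβS.1.2⟩, ?_⟩
      rw [← F.rho_mul hαS.1 hβS.1]
      exact mul_leM hM hαS.2 hβS.2
    have h7 : α * β ≤ P := le_csSup (bddAbove_SSet _) hmem
    have h8 : (t - δ) * (u - δ) ≤ α * β :=
      mul_le_mul hα.le hβ.le (by linarith) (by linarith [hαS.1.1, hα])
    nlinarith [htI.2, huI.2]

theorem hval_smul (hM : F.mv.IsMaximalIdeal M) {α : ℝ} (hα : α ∈ Set.Icc (0:ℝ) 1) (x : A) :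
    F.hval M (F.smul α x) = α * F.hval M x := by
  have htI := hval_mem_Icc hM.1 x
  have hvI := hval_mem_Icc hM.1 (F.smul α x)
  refine le_antisymm ?_ ?_
  · -- v ≤ α * t
    rcases eq_or_lt_of_le htI.2 with h1 | h1
    · -- t = 1
      have hle : F.mv.le (F.smul α x) (F.rho α) := F.smul_mono hα (F.mv.le_one x)
      have h2 := hval_mono hM hle
      rw [hval_rho hM hα] at h2
      rw [h1, mul_one]
      exact h2
    set t := F.hval M x with ht
    set v := F.hval M (F.smul α x) with hv
    by_contra hc
    push_neg at hc
    set D := v - α * t with hD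
    have hD0 : 0 < D := by linarith
    set δ := min ((1-t)/2) (D/2) with hδ
    have hδ0 : 0 < δ := lt_min (by linarith) (by linarith)
    have hδt : δ ≤ (1-t)/2 := min_le_left _ _
    have hδD : δ ≤ D/2 := min_le_right _ _
    have hβI : t + δ ∈ Set.Icc (0:ℝ) 1 := ⟨by linarith [htI.1], by linarith⟩
    have h3 : F.mv.sub x (F.rho (t+δ)) ∈ M := leM_of_hval_lt hM hβI (by linarith)
    have h4 : F.mv.sub (F.smul α x) (F.smul α (F.rho (t+δ))) ∈ M :=
      F.mv.mem_of_le hM.1 (F.smul_sub_le hα x _) h3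
    have h5 : F.smul α (F.rho (t+δ)) = F.rho (α * (t+δ)) := by
      show F.smul α (F.smul (t+δ) F.mv.one) = F.smul (α * (t+δ)) F.mv.one
      exact F.smul_smul' hα hβI _
    rw [h5] at h4
    have h6 := hval_le_of_leM hM
      ⟨mul_nonneg hα.1 (by linarith [htI.1]), mul_le_one₀ hα.2 (by linarith [htI.1]) hβI.2⟩ h4
    nlinarith [hα.2]
  · -- α * t ≤ v
    set t := F.hval M x with ht
    set v := F.hval M (F.smul α x) with hv
    by_contra hc
    push_neg at hc
    have hv0 : 0 ≤ v := hvI.1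
    have hα0 : 0 < α := by nlinarith [htI.2, htI.1, hα.1]
    have ht0 : 0 < t := by nlinarith [hα.2, htI.1, hα.1]
    set D := α * t - v with hD
    have hD0 : 0 < D := by linarith
    set δ := min (t/2) (D/2) with hδ
    have hδ0 : 0 < δ := lt_min (by linarith) (by linarith)
    obtain ⟨β, hβS, hβ⟩ := exists_lt_of_lt_csSup (SSet_nonempty hM.1 x)
      (show t - δ < t by linarith)
    have hmem : α * β ∈ F.SSet M (F.smul α x) := by
      refine ⟨⟨mul_nonneg hα.1 hβS.1.1, mul_le_one₀ hα.2 hβS.1.1 hβS.1.2⟩, ?_⟩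
      have h5 : F.rho (α * β) = F.smul α (F.rho β) := by
        show F.smul (α * β) F.mv.one = F.smul α (F.smul β F.mv.one)
        exact (F.smul_smul' hα hβS.1 _).symm
      rw [h5]
      exact F.mv.mem_of_le hM.1 (F.smul_sub_le hα _ _) hβS.2
    have h7 : α * β ≤ v := le_csSup (bddAbove_SSet _) hmem
    have hδD : δ ≤ D/2 := min_le_right _ _
    nlinarith [hα.2]

end FMVAlg

-- ====== the standard fMV-algebra on [0,1] ======

def UC : Type := {r : ℝ // 0 ≤ r ∧ r ≤ 1}

namespace UCStd

theorem ext' {a b : UC} (h : a.1 = b.1) : a = b := Subtype.ext h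

noncomputable def IMV : MVAlg UC where
  oplus a b := ⟨min 1 (a.1 + b.1), ⟨le_min zero_le_one (by linarith [a.2.1, b.2.1]), min_le_left _ _⟩⟩
  star a := ⟨1 - a.1, ⟨by linarith [a.2.2], by linarith [a.2.1]⟩⟩
  zero := ⟨0, le_rfl, zero_le_one⟩
  oplus_comm a b := ext' (by simp [add_comm])
  oplus_assoc a b c := ext' (by
    show min 1 (min 1 (a.1 + b.1) + c.1) = min 1 (a.1 + min 1 (b.1 + c.1))
    rcases le_total (a.1 + b.1) 1 with h | h <;> rcases le_total (b.1 + c.1) 1 with h2 | h2 <;>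
      simp [min_def] <;> split_ifs <;> linarith [a.2.1, a.2.2, b.2.1, b.2.2, c.2.1, c.2.2])
  oplus_zero a := ext' (by
    show min 1 (a.1 + 0) = a.1
    rw [add_zero, min_eq_right a.2.2])
  star_star a := ext' (by show 1 - (1 - a.1) = a.1; ring)
  oplus_one a := ext' (by
    show min 1 (a.1 + (1 - 0)) = 1 - 0
    rw [min_eq_left (by linarith [a.2.1])]
    norm_num)
  luk a b := ext' (by
    show min 1 (1 - min 1 (1 - a.1 + b.1) + b.1) = min 1 (1 - min 1 (1 - b.1 + a.1) + a.1)
    rcases le_total a.1 b.1 with h | h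
    · rw [min_eq_left (show (1:ℝ) ≤ 1 - a.1 + b.1 by linarith)]
      have e1 : (1:ℝ) - 1 + b.1 = b.1 := by ring
      rw [e1]
      rw [min_eq_right (show 1 - b.1 + a.1 ≤ (1:ℝ) by linarith)]
      have e2 : (1:ℝ) - (1 - b.1 + a.1) + a.1 = b.1 := by ring
      rw [e2]
    · rw [min_eq_left (show (1:ℝ) ≤ 1 - b.1 + a.1 by linarith)]
      have e1 : (1:ℝ) - 1 + a.1 = a.1 := by ring
      rw [e1]
      rw [min_eq_right (show 1 - a.1 + b.1 ≤ (1:ℝ) by linarith)]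
      have e2 : (1:ℝ) - (1 - a.1 + b.1) + b.1 = a.1 := by ring
      rw [e2])

theorem le_iff {a b : UC} : IMV.le a b ↔ a.1 ≤ b.1 := by
  constructor
  · intro h
    have h2 := congrArg Subtype.val h
    show a.1 ≤ b.1
    have h3 : min 1 (1 - a.1 + b.1) = 1 - 0 := h2
    rw [sub_zero] at h3
    have := min_eq_left_iff.mp h3
    linarith
  · intro h
    apply ext'
    show min 1 (1 - a.1 + b.1) = 1 - 0
    rw [sub_zero, min_eq_left (by linarith)]

noncomputable def IStd : FMVAlg UC where
  toMVAlg := IMV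
  mul a b := ⟨a.1 * b.1, ⟨mul_nonneg a.2.1 b.2.1, mul_le_one₀ a.2.2 b.2.1 b.2.2⟩⟩
  mul_assoc a b c := ext' (mul_assoc _ _ _)
  mul_comm a b := ext' (mul_comm _ _)
  mul_one a := ext' (by show a.1 * (1 - 0) = a.1; ring)
  mul_linear_right x y z h := by
    have hyz : y.1 + z.1 ≤ 1 := by
      have := le_iff.mp h
      show _ ≤ _
      have hz : (IMV.star z).1 = 1 - z.1 := rfl
      rw [hz] at this
      linarith
    apply ext'
    show x.1 * min 1 (y.1 + z.1) = min 1 (x.1 * y.1 + x.1 * z.1)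
    rw [min_eq_right hyz, min_eq_right (by nlinarith [x.2.1, x.2.2, y.2.1, z.2.1])]
    ring
  mul_linear_left x y z h := by
    have hyz : x.1 + y.1 ≤ 1 := by
      have := le_iff.mp h
      have hz : (IMV.star y).1 = 1 - y.1 := rfl
      rw [hz] at this
      linarith
    apply ext'
    show min 1 (x.1 + y.1) * z.1 = min 1 (x.1 * z.1 + y.1 * z.1)
    rw [min_eq_right hyz, min_eq_right (by nlinarith [z.2.1, z.2.2, x.2.1, y.2.1])]
    ring
  smul α a := ⟨min 1 (max 0 (α * a.1)), ⟨le_min zero_le_one (le_max_left _ _), min_le_left _ _⟩⟩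
  smul_oplus := by
    intro α hα x y h
    have hxy : x.1 + y.1 ≤ 1 := by
      have := le_iff.mp h
      have hz : (IMV.star y).1 = 1 - y.1 := rfl
      rw [hz] at this
      linarith
    apply ext'
    have e1 : max 0 (α * min 1 (x.1 + y.1)) = α * (x.1 + y.1) := by
      rw [min_eq_right hxy]
      exact max_eq_right (mul_nonneg hα.1 (by linarith [x.2.1, y.2.1]))
    have e2 : min 1 (max 0 (α * x.1)) = α * x.1 := by
      rw [max_eq_right (mul_nonneg hα.1 x.2.1)]
      exact min_eq_right (by nlinarith [hα.1, hα.2, x.2.1, x.2.2])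
    have e3 : min 1 (max 0 (α * y.1)) = α * y.1 := by
      rw [max_eq_right (mul_nonneg hα.1 y.2.1)]
      exact min_eq_right (by nlinarith [hα.1, hα.2, y.2.1, y.2.2])
    show min 1 (max 0 (α * min 1 (x.1 + y.1)))
      = min 1 (min 1 (max 0 (α * x.1)) + min 1 (max 0 (α * y.1)))
    rw [e1, e2, e3, mul_add]
  add_smul := by
    intro α β hα hβ hs x
    have hv : ∀ γ : ℝ, γ ∈ Set.Icc (0:ℝ) 1 → min 1 (max 0 (γ * x.1)) = γ * x.1 := by
      intro γ hγ
      rw [max_eq_right (mul_nonneg hγ.1 x.2.1),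
        min_eq_right (by nlinarith [hγ.1, hγ.2, x.2.1, x.2.2])]
    constructor
    · apply ext'
      show min 1 (max 0 ((α + β) * x.1))
        = min 1 (min 1 (max 0 (α * x.1)) + min 1 (max 0 (β * x.1)))
      rw [hv α hα, hv β hβ, hv (α+β) ⟨by linarith [hα.1, hβ.1], hs⟩,
        min_eq_right (by nlinarith [hα.1, hβ.1, x.2.1, x.2.2]), add_mul]
    · apply le_iff.mpr
      show min 1 (max 0 (α * x.1)) ≤ 1 - min 1 (max 0 (β * x.1))
      rw [hv α hα, hv β hβ]
      nlinarith [hα.1, hβ.1, x.2.1, x.2.2]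
  mul_smul := by
    intro α β hα hβ x
    have hv : ∀ γ : ℝ, γ ∈ Set.Icc (0:ℝ) 1 → ∀ y : UC, min 1 (max 0 (γ * y.1)) = γ * y.1 := by
      intro γ hγ y
      rw [max_eq_right (mul_nonneg hγ.1 y.2.1),
        min_eq_right (by nlinarith [hγ.1, hγ.2, y.2.1, y.2.2])]
    apply ext'
    show min 1 (max 0 ((α * β) * x.1)) = min 1 (max 0 (α * (min 1 (max 0 (β * x.1)))))
    rw [hv β hβ x, hv (α * β) ⟨mul_nonneg hα.1 hβ.1, mul_le_one₀ hα.2 hβ.1 hβ.2⟩ x]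
    have hβx : β * x.1 ∈ Set.Icc (0:ℝ) 1 :=
      ⟨mul_nonneg hβ.1 x.2.1, by nlinarith [hβ.1, hβ.2, x.2.1, x.2.2]⟩
    rw [max_eq_right (mul_nonneg hα.1 hβx.1),
      min_eq_right (by nlinarith [hα.1, hα.2, hβx.1, hβx.2]), mul_assoc]
  one_smul x := ext' (by
    show min 1 (max 0 (1 * x.1)) = x.1
    rw [one_mul, max_eq_right x.2.1, min_eq_right x.2.2])
  smul_mul_left := by
    intro α hα x y
    apply ext'
    show min 1 (max 0 (α * (x.1 * y.1))) = min 1 (max 0 (α * x.1)) * y.1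
    have hxy : x.1 * y.1 ∈ Set.Icc (0:ℝ) 1 :=
      ⟨mul_nonneg x.2.1 y.2.1, mul_le_one₀ x.2.2 y.2.1 y.2.2⟩
    rw [max_eq_right (mul_nonneg hα.1 hxy.1),
      min_eq_right (by nlinarith [hα.1, hα.2, hxy.1, hxy.2]),
      max_eq_right (mul_nonneg hα.1 x.2.1),
      min_eq_right (by nlinarith [hα.1, hα.2, x.2.1, x.2.2]), mul_assoc]
  smul_mul_right := by
    intro α hα x y
    apply ext'
    show min 1 (max 0 (α * (x.1 * y.1))) = x.1 * min 1 (max 0 (α * y.1))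
    have hxy : x.1 * y.1 ∈ Set.Icc (0:ℝ) 1 :=
      ⟨mul_nonneg x.2.1 y.2.1, mul_le_one₀ x.2.2 y.2.1 y.2.2⟩
    rw [max_eq_right (mul_nonneg hα.1 hxy.1),
      min_eq_right (by nlinarith [hα.1, hα.2, hxy.1, hxy.2]),
      max_eq_right (mul_nonneg hα.1 y.2.1),
      min_eq_right (by nlinarith [hα.1, hα.2, y.2.1, y.2.2])]
    ring

end UCStd

namespace UCStd

variable (S : Type v)

noncomputable def Pow : FMVAlg (S → UC) where
  oplus f g := fun s => IMV.oplus (f s) (g s)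
  star f := fun s => IMV.star (f s)
  zero := fun _ => IMV.zero
  oplus_comm f g := funext fun s => IMV.oplus_comm _ _
  oplus_assoc f g h := funext fun s => IMV.oplus_assoc _ _ _
  oplus_zero f := funext fun s => IMV.oplus_zero _
  star_star f := funext fun s => IMV.star_star _
  oplus_one f := funext fun s => IMV.oplus_one _
  luk f g := funext fun s => IMV.luk _ _
  mul f g := fun s => IStd.mul (f s) (g s)
  mul_assoc f g h := funext fun s => IStd.mul_assoc _ _ _
  mul_comm f g := funext fun s => IStd.mul_comm _ _
  mul_one f := funext fun s => IStd.mul_one _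
  mul_linear_right f g h hle := funext fun s =>
    IStd.mul_linear_right (f s) (g s) (h s) (congrFun hle s)
  mul_linear_left f g h hle := funext fun s =>
    IStd.mul_linear_left (f s) (g s) (h s) (congrFun hle s)
  smul α f := fun s => IStd.smul α (f s)
  smul_oplus α hα f g hle := funext fun s =>
    IStd.smul_oplus α hα (f s) (g s) (congrFun hle s)
  add_smul α β hα hβ hs f :=
    ⟨funext fun s => (IStd.add_smul α β hα hβ hs (f s)).1,
     funext fun s => (IStd.add_smul α β hα hβ hs (f s)).2⟩
  mul_smul α β hα hβ f := funext fun s => IStd.mul_smul α β hα hβ (f s)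
  one_smul f := funext fun s => IStd.one_smul (f s)
  smul_mul_left α hα f g := funext fun s => IStd.smul_mul_left α hα (f s) (g s)
  smul_mul_right α hα f g := funext fun s => IStd.smul_mul_right α hα (f s) (g s)

variable {S}

theorem pow_le_iff {f g : S → UC} : (Pow S).mv.le f g ↔ ∀ s, IMV.le (f s) (g s) := by
  constructor
  · intro h s
    exact congrFun h s
  · intro h
    exact funext h

theorem pow_nfold (g : S → UC) (n : ℕ) (s : S) :
    (Pow S).mv.nfold g n s = IMV.nfold (g s) n := by
  induction n with
  | zero => rfl
  | succ n ih =>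
      show IMV.oplus (g s) ((Pow S).mv.nfold g n s) = _
      rw [ih]
      rfl

theorem rho_val (c : ℝ) (hc : c ∈ Set.Icc (0:ℝ) 1) (u : UC) (hu : u.1 = c) :
    IStd.rho c = u := by
  apply ext'
  show min 1 (max 0 (c * (1 - 0))) = u.1
  rw [hu, mul_sub, mul_zero, mul_one, sub_zero, max_eq_right hc.1, min_eq_right hc.2]

theorem pow_maximal (s : S) :
    (Pow S).mv.IsMaximalIdeal {f : S → UC | f s = IMV.zero} := by
  set Is : Set (S → UC) := {f : S → UC | f s = IMV.zero} with hIs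
  have hIdeal : (Pow S).mv.IsIdeal Is := by
    refine ⟨rfl, ?_, ?_⟩
    · intro f hf g hg
      show IMV.oplus (f s) (g s) = IMV.zero
      rw [hf, hg]
      exact IMV.oplus_zero _
    · intro f g hle hg
      have h1 : IMV.le (f s) (g s) := congrFun hle s
      rw [hg] at h1
      show f s = IMV.zero
      apply ext'
      have h2 := le_iff.mp h1
      have h3 : (IMV.zero).1 = 0 := rfl
      rw [h3] at h2
      exact le_antisymm h2 (f s).2.1
  have hone : (Pow S).mv.one ∉ Is := by
    intro hc
    have h1 : ((Pow S).mv.one s).1 = (IMV.zero).1 := by rw [hc]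
    have h2 : ((Pow S).mv.one s).1 = 1 - 0 := rfl
    have h3 : (IMV.zero).1 = 0 := rfl
    rw [h2, h3] at h1
    norm_num at h1
  refine ⟨hIdeal, ?_, ?_⟩
  · intro hc
    exact hone (hc ▸ Set.mem_univ _)
  · intro J hJ hJne hIsJ
    refine Set.Subset.antisymm ?_ hIsJ
    intro g hg
    show g s = IMV.zero
    by_contra hgs
    -- (g s).1 > 0
    have hc0 : 0 < (g s).1 := by
      rcases lt_or_eq_of_le (g s).2.1 with h | h
      · exact h
      · exact absurd (ext' h.symm) hgs
    -- choose n with n * c ≥ 1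
    obtain ⟨n, hn⟩ := exists_nat_ge (1/(g s).1)
    have hn1 : (1:ℝ) ≤ (n:ℝ) * (g s).1 := by
      rw [div_le_iff₀ hc0] at hn
      linarith
    have hnf : (Pow S).mv.nfold g n s = IMV.one := by
      rw [pow_nfold]
      have hgr : IStd.rho ((g s).1) = g s := rho_val _ (g s).2 _ rfl
      have h4 : IMV.nfold (g s) n = IStd.mv.nfold (IStd.rho ((g s).1)) n := by
        rw [hgr]
        rfl
      rw [h4, IStd.nfold_rho (g s).2, min_eq_left hn1, IStd.rho_one]
      rfl
    -- J = univ, contradiction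
    apply hJne
    apply Set.eq_univ_of_forall
    intro f
    have hwJ : (Pow S).mv.nfold g n ∈ J := (Pow S).mv.nfold_mem hJ hg n
    have heI : (Pow S).mv.sub f ((Pow S).mv.nfold g n) ∈ Is := by
      show IMV.sub (f s) ((Pow S).mv.nfold g n s) = IMV.zero
      rw [hnf, IMV.sub_one]
    have hle := (Pow S).mv.le_oplus_sub f ((Pow S).mv.nfold g n)
    exact (Pow S).mv.mem_of_le hJ hle ((Pow S).mv.oplus_mem hJ hwJ (hIsJ heI))

theorem pow_semisimple : (Pow S).Semisimple := by
  apply Set.Subset.antisymm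
  · intro x hx
    have h1 : ∀ s : S, x s = IMV.zero := fun s => hx _ (pow_maximal s)
    have h2 : x = (Pow S).mv.zero := funext h1
    exact h2
  · intro x hx
    rw [Set.mem_singleton_iff] at hx
    intro I hI
    rw [hx]
    exact hI.1.1

end UCStd

-- ====== hom machinery ======
namespace UCStd

open FMVAlg

variable {A : Type u} {F : FMVAlg A}

noncomputable def homOf {M : Set A} (hM : F.mv.IsMaximalIdeal M) : A → UC :=
  fun x => ⟨F.hval M x, (hval_mem_Icc hM.1 x).1, (hval_mem_Icc hM.1 x).2⟩

theorem homOf_isHom {M : Set A} (hM : F.mv.IsMaximalIdeal M) :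
    FMVHom F IStd (homOf hM) := by
  refine ⟨⟨?_, ?_, ?_⟩, ?_, ?_⟩
  · intro x y
    apply ext'
    show F.hval M (F.mv.oplus x y) = min 1 (F.hval M x + F.hval M y)
    exact hval_oplus hM x y
  · intro x
    apply ext'
    show F.hval M (F.mv.star x) = 1 - F.hval M x
    exact hval_star hM x
  · apply ext'
    show F.hval M F.mv.zero = (0:ℝ)
    exact hval_of_mem hM hM.1.1
  · intro x y
    apply ext'
    show F.hval M (F.mul x y) = F.hval M x * F.hval M y
    exact hval_mul hM x y
  · intro α hα x
    apply ext'
    show F.hval M (F.smul α x) = min 1 (max 0 (α * F.hval M x))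
    rw [hval_smul hM hα x,
      max_eq_right (mul_nonneg hα.1 (hval_mem_Icc hM.1 x).1),
      min_eq_right (by nlinarith [hα.1, hα.2, (hval_mem_Icc hM.1 x).1,
        (hval_mem_Icc hM.1 x).2])]

theorem homOf_zero_of_mem {M : Set A} (hM : F.mv.IsMaximalIdeal M) {x : A} (hx : x ∈ M) :
    homOf hM x = IMV.zero := ext' (hval_of_mem hM hx)

theorem homOf_ne_zero_of_notin {M : Set A} (hM : F.mv.IsMaximalIdeal M) {x : A}
    (hx : x ∉ M) : homOf hM x ≠ IMV.zero := by
  intro hc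
  have h1 : F.hval M x = 0 := congrArg Subtype.val hc
  exact absurd h1 (ne_of_gt (hval_pos_of_notin hM hx))

end UCStd

-- generic FMV hom lemmas
section HomLemmas

open FMVAlg

variable {A : Type u} {B : Type v} {C : Type w}
variable {F : FMVAlg A} {G : FMVAlg B} {H : FMVAlg C}

theorem FMVHom.comp {f : A → B} {g : B → C} (hf : FMVHom F G f) (hg : FMVHom G H g) :
    FMVHom F H (g ∘ f) := by
  obtain ⟨⟨f1, f2, f3⟩, f4, f5⟩ := hf
  obtain ⟨⟨g1, g2, g3⟩, g4, g5⟩ := hg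
  refine ⟨⟨?_, ?_, ?_⟩, ?_, ?_⟩
  · intro x y; show g (f _) = _; rw [f1, g1]; rfl
  · intro x; show g (f _) = _; rw [f2, g2]; rfl
  · show g (f _) = _; rw [f3, g3]
  · intro x y; show g (f _) = _; rw [f4, g4]; rfl
  · intro α hα x; show g (f _) = _; rw [f5 α hα, g5 α hα]; rfl

theorem FMVHom.one {f : A → B} (hf : FMVHom F G f) : f F.mv.one = G.mv.one := by
  show f (F.mv.star F.mv.zero) = G.mv.star G.mv.zero
  rw [hf.1.2.1, hf.1.2.2]

theorem FMVHom.sub {f : A → B} (hf : FMVHom F G f) (x y : A) :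
    f (F.mv.sub x y) = G.mv.sub (f x) (f y) := by
  show f (F.mv.star (F.mv.oplus (F.mv.star x) y)) = _
  rw [hf.1.2.1, hf.1.1, hf.1.2.1]
  rfl

theorem FMVHom.le {f : A → B} (hf : FMVHom F G f) {x y : A} (h : F.mv.le x y) :
    G.mv.le (f x) (f y) := by
  show G.mv.oplus (G.mv.star (f x)) (f y) = G.mv.one
  rw [← hf.1.2.1, ← hf.1.1, h, hf.one]

theorem FMVHom.rho {f : A → B} (hf : FMVHom F G f) {α : ℝ} (hα : α ∈ Set.Icc (0:ℝ) 1) :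
    f (F.rho α) = G.rho α := by
  show f (F.smul α F.mv.one) = G.smul α G.mv.one
  rw [hf.2.2 α hα, hf.one]

end HomLemmas

namespace UCStd

open FMVAlg

variable {A : Type u} {F : FMVAlg A}

theorem hom_eq_of_ker_subset {g1 g2 : A → UC} (h1 : FMVHom F IStd g1)
    (h2 : FMVHom F IStd g2)
    (hker : ∀ z, g1 z = IMV.zero → g2 z = IMV.zero) : g1 = g2 := by
  have key : ∀ (p1 p2 : A → UC), FMVHom F IStd p1 → FMVHom F IStd p2 →
      (∀ z, p1 z = IMV.zero → p2 z = IMV.zero) → ∀ z, (p1 z).1 ≤ (p2 z).1 := by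
    intro p1 p2 hp1 hp2 hk z
    set α := (p1 z).1 with hα
    have hαI : α ∈ Set.Icc (0:ℝ) 1 := ⟨(p1 z).2.1, (p1 z).2.2⟩
    have hu1 : p1 (F.mv.sub (F.rho α) z) = IMV.zero := by
      rw [hp1.sub, hp1.rho hαI]
      have : IStd.rho α = p1 z := rho_val α hαI (p1 z) rfl
      rw [this]
      exact IStd.mv.sub_self (p1 z)
    have hu2 := hk _ hu1
    rw [hp2.sub, hp2.rho hαI] at hu2
    have h3 : IStd.mv.le (IStd.rho α) (p2 z) := IStd.mv.le_of_sub_eq_zero hu2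
    have h4 := le_iff.mp h3
    have h5 : (IStd.rho α).1 = α := congrArg Subtype.val (rho_val α hαI ⟨α, hαI.1, hαI.2⟩ rfl)
    rw [h5] at h4
    exact h4
  funext z
  apply ext'
  refine le_antisymm (key g1 g2 h1 h2 hker z) ?_
  -- use star z
  have h6 := key g1 g2 h1 h2 hker (F.mv.star z)
  rw [h1.1.2.1, h2.1.2.1] at h6
  have e1 : (IStd.mv.star (g1 z)).1 = 1 - (g1 z).1 := rfl
  have e2 : (IStd.mv.star (g2 z)).1 = 1 - (g2 z).1 := rfl
  rw [e1, e2] at h6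
  linarith

theorem exists_maximal_ideal_ext (F : FMVAlg A) {I0 : Set A} (hI0 : F.mv.IsIdeal I0)
    (hone : F.mv.one ∉ I0) :
    ∃ M : Set A, F.mv.IsMaximalIdeal M ∧ I0 ⊆ M := by
  set S : Set (Set A) := {J | F.mv.IsIdeal J ∧ F.mv.one ∉ J} with hS
  have hchain : ∀ c ⊆ S, IsChain (· ⊆ ·) c → c.Nonempty → ∃ ub ∈ S, ∀ s ∈ c, s ⊆ ub := by
    intro c hcS hchain ⟨J0, hJ0⟩
    refine ⟨⋃₀ c, ⟨⟨?_, ?_, ?_⟩, ?_⟩, fun s hs => Set.subset_sUnion_of_mem hs⟩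
    · exact ⟨J0, hJ0, (hcS hJ0).1.1⟩
    · rintro x ⟨J1, hJ1, hx⟩ y ⟨J2, hJ2, hy⟩
      rcases hchain.total hJ1 hJ2 with h | h
      · exact ⟨J2, hJ2, (hcS hJ2).1.2.1 x (h hx) y hy⟩
      · exact ⟨J1, hJ1, (hcS hJ1).1.2.1 x hx y (h hy)⟩
    · rintro x y hxy ⟨J1, hJ1, hy⟩
      exact ⟨J1, hJ1, (hcS hJ1).1.2.2 x y hxy hy⟩
    · rintro ⟨J1, hJ1, hx⟩
      exact (hcS hJ1).2 hx
  obtain ⟨Mx, hI0M, hMx⟩ := zorn_subset_nonempty S hchain I0 ⟨hI0, hone⟩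
  refine ⟨Mx, ⟨hMx.1.1, ?_, ?_⟩, hI0M⟩
  · intro hc
    exact hMx.1.2 (hc ▸ Set.mem_univ _)
  · intro J hJ hJne hMJ
    have hJS : J ∈ S := ⟨hJ, F.mv.one_notin hJ hJne⟩
    exact Set.Subset.antisymm (hMx.2 hJS hMJ) hMJ

theorem extend_hom {Z : Type u} {B : Type v} {ZA : FMVAlg Z} {BA : FMVAlg B}
    {j : Z → B} (hj : FMVHom ZA BA j) (hinj : Function.Injective j)
    {g : Z → UC} (hg : FMVHom ZA IStd g) :
    ∃ q : B → UC, FMVHom BA IStd q ∧ q ∘ j = g := by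
  set I0 : Set B := {b | ∃ z, g z = IMV.zero ∧ BA.mv.le b (j z)} with hI0
  have hI0I : BA.mv.IsIdeal I0 := by
    refine ⟨⟨ZA.mv.zero, hg.1.2.2, ?_⟩, ?_, ?_⟩
    · rw [hj.1.2.2]
      exact BA.mv.zero_le _
    · rintro x ⟨z1, hz1, hx⟩ y ⟨z2, hz2, hy⟩
      refine ⟨ZA.mv.oplus z1 z2, ?_, ?_⟩
      · rw [hg.1.1, hz1, hz2]
        exact IMV.oplus_zero _
      · rw [hj.1.1]
        exact BA.mv.oplus_le_oplus hx hy
    · rintro x y hxy ⟨z1, hz1, hy⟩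
      exact ⟨z1, hz1, BA.mv.le_trans hxy hy⟩
  have honeI0 : BA.mv.one ∉ I0 := by
    rintro ⟨z1, hz1, hone⟩
    have h1 : j z1 = BA.mv.one := BA.mv.one_le hone
    have h2 : j ZA.mv.one = BA.mv.one := hj.one
    have h3 : z1 = ZA.mv.one := hinj (h1.trans h2.symm)
    rw [h3, hg.one] at hz1
    have h4 : (IStd.mv.one).1 = 1 - 0 := rfl
    have h5 : (IMV.zero).1 = 0 := rfl
    have := congrArg Subtype.val hz1
    rw [h4, h5] at this
    norm_num at this
  obtain ⟨Mx, hMx, hI0M⟩ := exists_maximal_ideal_ext BA hI0I honeI0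
  refine ⟨homOf hMx, homOf_isHom hMx, ?_⟩
  have hcomp : FMVHom ZA IStd (homOf hMx ∘ j) := hj.comp (homOf_isHom hMx)
  refine (hom_eq_of_ker_subset hg hcomp ?_).symm
  intro z hz
  show homOf hMx (j z) = IMV.zero
  apply homOf_zero_of_mem hMx
  exact hI0M ⟨z, hz, BA.mv.le_refl _⟩

theorem exists_separating_hom {F : FMVAlg A} (hss : F.Semisimple) {x y : A} (hxy : x ≠ y) :
    ∃ p : A → UC, FMVHom F IStd p ∧ p x ≠ p y := by
  have hsub : F.mv.sub x y ≠ F.mv.zero ∨ F.mv.sub y x ≠ F.mv.zero := by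
    by_contra hc
    push_neg at hc
    exact hxy (F.mv.eq_of_sub_eq_zero hc.1 hc.2)
  have main : ∀ u v : A, F.mv.sub u v ≠ F.mv.zero →
      ∃ p : A → UC, FMVHom F IStd p ∧ p u ≠ p v := by
    intro u v huv
    have h1 : F.mv.sub u v ∉ ({F.mv.zero} : Set A) := huv
    rw [← hss] at h1
    simp only [Set.mem_setOf_eq, not_forall] at h1
    obtain ⟨Mx, hMx, hnotin⟩ := h1
    refine ⟨homOf hMx, homOf_isHom hMx, ?_⟩
    intro hc
    have h2 : homOf hMx (F.mv.sub u v) = IMV.zero := by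
      rw [(homOf_isHom hMx).sub, hc]
      exact IStd.mv.sub_self _
    exact homOf_ne_zero_of_notin hMx hnotin h2
  rcases hsub with h | h
  · exact main x y h
  · obtain ⟨p, hp, hne⟩ := main y x h
    exact ⟨p, hp, fun hc => hne hc.symm⟩

end UCStd


open UCStd FMVAlg

/-- unital commutative semisimple fMV-algebras have the amalgamation property. -/
theorem stmt12 {ZC AC BC : Type u}
    (Z : FMVAlg ZC) (A : FMVAlg AC) (B : FMVAlg BC)
    (hZ : Z.Semisimple) (hA : A.Semisimple) (hB : B.Semisimple)
    (zA : ZC → AC) (zB : ZC → BC)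
    (hzA : FMVHom Z A zA) (hzB : FMVHom Z B zB)
    (hiA : Function.Injective zA) (hiB : Function.Injective zB) :
    ∃ (EC : Type u) (E : FMVAlg EC) (fA : AC → EC) (fB : BC → EC),
      E.Semisimple ∧ FMVHom A E fA ∧ FMVHom B E fB ∧
      Function.Injective fA ∧ Function.Injective fB ∧ fA ∘ zA = fB ∘ zB := by
  classical
  let S : Type u := {pq : (AC → UC) × (BC → UC) //
    FMVHom A IStd pq.1 ∧ FMVHom B IStd pq.2 ∧ pq.1 ∘ zA = pq.2 ∘ zB}
  let fA : AC → (S → UC) := fun a pq => pq.1.1 a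
  let fB : BC → (S → UC) := fun b pq => pq.1.2 b
  refine ⟨S → UC, Pow S, fA, fB, pow_semisimple, ?_, ?_, ?_, ?_, ?_⟩
  · refine ⟨⟨?_, ?_, ?_⟩, ?_, ?_⟩
    · intro x y; exact funext fun pq => pq.2.1.1.1 x y
    · intro x; exact funext fun pq => pq.2.1.1.2.1 x
    · exact funext fun pq => pq.2.1.1.2.2
    · intro x y; exact funext fun pq => pq.2.1.2.1 x y
    · intro α hα x; exact funext fun pq => pq.2.1.2.2 α hα x
  · refine ⟨⟨?_, ?_, ?_⟩, ?_, ?_⟩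
    · intro x y; exact funext fun pq => pq.2.2.1.1.1 x y
    · intro x; exact funext fun pq => pq.2.2.1.1.2.1 x
    · exact funext fun pq => pq.2.2.1.1.2.2
    · intro x y; exact funext fun pq => pq.2.2.1.2.1 x y
    · intro α hα x; exact funext fun pq => pq.2.2.1.2.2 α hα x
  · -- injectivity of fA
    intro a a' h
    by_contra hne
    obtain ⟨p, hp, hpne⟩ := exists_separating_hom hA hne
    have hcompZ : FMVHom Z IStd (p ∘ zA) := hzA.comp hp
    obtain ⟨q, hq, hqz⟩ := extend_hom hzB hiB hcompZ
    have helem : FMVHom A IStd (p, q).1 ∧ FMVHom B IStd (p, q).2 ∧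
        (p, q).1 ∘ zA = (p, q).2 ∘ zB := ⟨hp, hq, hqz.symm⟩
    have := congrFun h (⟨(p, q), helem⟩ : S)
    exact hpne this
  · -- injectivity of fB
    intro b b' h
    by_contra hne
    obtain ⟨q, hq, hqne⟩ := exists_separating_hom hB hne
    have hcompZ : FMVHom Z IStd (q ∘ zB) := hzB.comp hq
    obtain ⟨p, hp, hpz⟩ := extend_hom hzA hiA hcompZ
    have helem : FMVHom A IStd (p, q).1 ∧ FMVHom B IStd (p, q).2 ∧
        (p, q).1 ∘ zA = (p, q).2 ∘ zB := ⟨hp, hq, hpz⟩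
    have := congrFun h (⟨(p, q), helem⟩ : S)
    exact hqne this
  · funext z
    exact funext fun pq => congrFun pq.2.2.2 z
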